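/- arXiv:1607.01461 — 5 statements merged into one kernel-verified Lean document; each statement's English description precedes it below -/
import Mathlib

section
/- For a scalar Gaussian input X ~ N(0,1) observed through Y = √snr·X + Z with Z ~ N(0,1) independent of X, and for any p ≥ 1, the minimum mean p-th error satisfies mmpe(X, snr, p) = inf_f E[|X - f(Y)|^p] = E[|Z|^p] / (1+snr)^{p/2}, and the infimum is achieved by the linear estimator f(y) = (√snr/(1+snr)) y. -/
open MeasureTheory ProbabilityTheory Real Set
open scoped ENNReal NNReal

-- pointwise convexity
lemma pw_convex {p : ℝ} (hp : 1 ≤ p) (w c : ℝ) :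
    (‖w‖₊ : ENNReal) ^ p ≤ 2⁻¹ * (‖w - c‖₊ : ENNReal) ^ p + 2⁻¹ * (‖w + c‖₊ : ENNReal) ^ p := by
  have h0 : (0:ℝ) ≤ p := le_trans zero_le_one hp
  have h1 : ‖w‖₊ ≤ 2⁻¹ * ‖w - c‖₊ + 2⁻¹ * ‖w + c‖₊ := by
    rw [← NNReal.coe_le_coe]
    push_cast
    simp only [coe_nnnorm, Real.norm_eq_abs]
    have : w = ((w - c) + (w + c)) / 2 := by ring
    calc |w| = |((w - c) + (w + c))| / 2 := by nth_rewrite 1 [this]; rw [abs_div, abs_two]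
    _ ≤ (|w - c| + |w + c|) / 2 := by gcongr; exact abs_add_le _ _
    _ = 2⁻¹ * |w - c| + 2⁻¹ * |w + c| := by ring
  have h2 : (‖w‖₊ : NNReal) ^ p ≤ 2⁻¹ * ‖w - c‖₊ ^ p + 2⁻¹ * ‖w + c‖₊ ^ p :=
    le_trans (NNReal.rpow_le_rpow h1 h0)
      (NNReal.rpow_arith_mean_le_arith_mean2_rpow 2⁻¹ 2⁻¹ _ _ (by rw [← NNReal.coe_inj]; push_cast; norm_num) hp)
  calc (‖w‖₊ : ENNReal) ^ p = ((‖w‖₊ ^ p : NNReal) : ENNReal) := by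
        rw [ENNReal.coe_rpow_of_nonneg _ h0]
  _ ≤ (((2⁻¹ * ‖w - c‖₊ ^ p + 2⁻¹ * ‖w + c‖₊ ^ p : NNReal)) : ENNReal) := ENNReal.coe_le_coe.2 h2
  _ = 2⁻¹ * (‖w - c‖₊ : ENNReal) ^ p + 2⁻¹ * (‖w + c‖₊ : ENNReal) ^ p := by
        push_cast [ENNReal.coe_rpow_of_nonneg _ h0]
        rfl

lemma gauss_neg : (gaussianReal 0 1).map (fun x : ℝ => -x) = gaussianReal 0 1 := by
  have := gaussianReal_map_const_mul (μ := 0) (v := 1) (-1)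
  simp only [neg_one_mul, neg_zero] at this
  convert this using 3
  rw [← NNReal.coe_inj]; push_cast; norm_num

lemma sym_bound {p : ℝ} (hp : 1 ≤ p) (a c : ℝ) :
    ∫⁻ v, (‖a * v‖₊ : ENNReal) ^ p ∂(gaussianReal 0 1)
      ≤ ∫⁻ v, (‖a * v - c‖₊ : ENNReal) ^ p ∂(gaussianReal 0 1) := by
  have hmeas : ∀ b : ℝ, Measurable (fun v : ℝ => (‖a * v + b‖₊ : ENNReal) ^ p) := fun b =>
    (((measurable_const.mul measurable_id).add measurable_const).enorm).pow_const p
  have hmeas' : ∀ b : ℝ, Measurable (fun v : ℝ => (‖a * v - b‖₊ : ENNReal) ^ p) := by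
    intro b; simpa [sub_eq_add_neg] using hmeas (-b)
  have hB : ∫⁻ v, (‖a * v + c‖₊ : ENNReal) ^ p ∂(gaussianReal 0 1)
      = ∫⁻ v, (‖a * v - c‖₊ : ENNReal) ^ p ∂(gaussianReal 0 1) := by
    conv_lhs => rw [← gauss_neg]
    rw [lintegral_map (hmeas c) measurable_neg]
    congr 1; funext v
    have : a * (-v) + c = -(a * v - c) := by ring
    rw [this, nnnorm_neg]
  calc ∫⁻ v, (‖a * v‖₊ : ENNReal) ^ p ∂(gaussianReal 0 1)
      ≤ ∫⁻ v, (2⁻¹ * (‖a * v - c‖₊ : ENNReal) ^ p + 2⁻¹ * (‖a * v + c‖₊ : ENNReal) ^ p)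
          ∂(gaussianReal 0 1) := lintegral_mono fun v => pw_convex hp (a * v) c
    _ = 2⁻¹ * (∫⁻ v, (‖a * v - c‖₊ : ENNReal) ^ p ∂(gaussianReal 0 1))
        + 2⁻¹ * (∫⁻ v, (‖a * v + c‖₊ : ENNReal) ^ p ∂(gaussianReal 0 1)) := by
        rw [lintegral_add_left ((hmeas' c).const_mul 2⁻¹), lintegral_const_mul 2⁻¹ (hmeas' c),
          lintegral_const_mul 2⁻¹ (hmeas c)]
    _ = ∫⁻ v, (‖a * v - c‖₊ : ENNReal) ^ p ∂(gaussianReal 0 1) := by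
        rw [hB, ← two_mul, ← mul_assoc, ENNReal.mul_inv_cancel two_ne_zero ENNReal.ofNat_ne_top,
          one_mul]

lemma integrable_abs_exp {p : ℝ} (hp : 0 ≤ p) :
    Integrable (fun x : ℝ => |x| ^ p * Real.exp (-(2⁻¹) * x ^ 2)) := by
  have hs : (-1 : ℝ) < p := by linarith
  have hb : (0 : ℝ) < 2⁻¹ := by norm_num
  have base : IntegrableOn (fun x : ℝ => |x| ^ p * Real.exp (-(2⁻¹) * x ^ 2)) (Ioi 0) :=
    (integrableOn_rpow_mul_exp_neg_mul_sq hb hs).congr_fun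
      (fun x hx => by rw [abs_of_pos hx]) measurableSet_Ioi
  rw [← integrableOn_univ, ← Iio_union_Ici (a := (0:ℝ)), integrableOn_union,
    integrableOn_Ici_iff_integrableOn_Ioi]
  refine ⟨?_, base⟩
  rw [← (Measure.measurePreserving_neg (volume : Measure ℝ)).integrableOn_comp_preimage
      (Homeomorph.neg ℝ).measurableEmbedding]
  simpa [Function.comp_def, abs_neg, neg_sq] using base

lemma integrable_abs_gauss {p : ℝ} (hp : 0 ≤ p) :
    Integrable (fun x : ℝ => |x| ^ p) (gaussianReal 0 1) := by
  rw [gaussianReal_of_var_ne_zero 0 one_ne_zero,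
    integrable_withDensity_iff (measurable_gaussianPDF 0 1)
      (ae_of_all _ fun x => ENNReal.ofReal_lt_top)]
  refine (((integrable_abs_exp hp).const_mul ((Real.sqrt (2 * π))⁻¹)).congr ?_)
  refine ae_of_all _ fun x => ?_
  have h1 : (gaussianPDF 0 1 x).toReal = gaussianPDFReal 0 1 x :=
    ENNReal.toReal_ofReal (gaussianPDFReal_nonneg 0 1 x)
  simp only [h1, gaussianPDFReal]
  push_cast
  rw [show -(x - 0) ^ 2 / (2 * (1:ℝ)) = -(2⁻¹) * x ^ 2 by ring, mul_one]
  ring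

lemma lint_moment {p : ℝ} (hp : 0 ≤ p) :
    ∫⁻ x, (‖x‖₊ : ENNReal) ^ p ∂(gaussianReal 0 1)
      = ENNReal.ofReal (∫ x, |x| ^ p ∂(gaussianReal 0 1)) := by
  rw [ofReal_integral_eq_lintegral_ofReal (integrable_abs_gauss hp)
    (ae_of_all _ fun x => Real.rpow_nonneg (abs_nonneg x) p)]
  congr 1; funext x
  rw [← enorm_eq_nnnorm, Real.enorm_eq_ofReal_abs, ENNReal.ofReal_rpow_of_nonneg (abs_nonneg x) hp]

lemma scale_val {p : ℝ} (hp : 0 ≤ p) {a : ℝ} (ha : 0 ≤ a) :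
    ∫⁻ v, (‖a * v‖₊ : ENNReal) ^ p ∂(gaussianReal 0 1)
      = ENNReal.ofReal (a ^ p * ∫ x, |x| ^ p ∂(gaussianReal 0 1)) := by
  have key : ∀ v : ℝ, (‖a * v‖₊ : ENNReal) ^ p
      = ENNReal.ofReal (a ^ p) * (‖v‖₊ : ENNReal) ^ p := by
    intro v
    rw [← enorm_eq_nnnorm, ← enorm_eq_nnnorm, Real.enorm_eq_ofReal_abs, Real.enorm_eq_ofReal_abs,
      ENNReal.ofReal_rpow_of_nonneg (abs_nonneg _) hp,
      ENNReal.ofReal_rpow_of_nonneg (abs_nonneg _) hp, ← ENNReal.ofReal_mul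
      (Real.rpow_nonneg ha p), abs_mul, abs_of_nonneg ha,
      Real.mul_rpow ha (abs_nonneg v)]
  simp_rw [key]
  rw [lintegral_const_mul _ (show Measurable fun v : ℝ => (‖v‖₊ : ENNReal) ^ p from measurable_enorm.pow_const p), lint_moment hp,
    ← ENNReal.ofReal_mul (Real.rpow_nonneg ha p)]

lemma map_equiv_withDensity {α β : Type*} [MeasurableSpace α] [MeasurableSpace β]
    (e : α ≃ᵐ β) (μ : Measure α) {f : α → ℝ≥0∞} (hf : Measurable f) :
    (μ.withDensity f).map e = (μ.map e).withDensity (fun y => f (e.symm y)) := by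
  ext s hs
  rw [Measure.map_apply e.measurable hs, withDensity_apply _ (e.measurable hs),
    withDensity_apply _ hs,
    setLIntegral_map hs (show Measurable fun y => f (e.symm y) from hf.comp e.symm.measurable) e.measurable]
  refine lintegral_congr fun x => by rw [e.symm_apply_apply]

lemma gauss_prod : (gaussianReal 0 1).prod (gaussianReal 0 1)
    = ((volume : Measure ℝ).prod volume).withDensity
        (fun q => gaussianPDF 0 1 q.1 * gaussianPDF 0 1 q.2) := by
  refine Measure.prod_eq fun s t hs ht => ?_
  rw [withDensity_apply _ (hs.prod ht), ← Measure.prod_restrict,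
    lintegral_prod_mul (measurable_gaussianPDF 0 1).aemeasurable
      (measurable_gaussianPDF 0 1).aemeasurable,
    gaussianReal_of_var_ne_zero 0 one_ne_zero, withDensity_apply _ hs, withDensity_apply _ ht]

lemma rot_inv {r a : ℝ} (h : a ^ 2 * (r ^ 2 + 1) = 1) :
    ((gaussianReal 0 1).prod (gaussianReal 0 1)).map
        (fun q : ℝ × ℝ => (a * (r * q.1 + q.2), a * (q.1 - r * q.2)))
      = (gaussianReal 0 1).prod (gaussianReal 0 1) := by
  set T : ℝ × ℝ → ℝ × ℝ := fun q => (a * (r * q.1 + q.2), a * (q.1 - r * q.2)) with hT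
  have hTmeas : Measurable T :=
    ((measurable_const.mul ((measurable_const.mul measurable_fst).add measurable_snd))).prodMk
      (measurable_const.mul (measurable_fst.sub (measurable_const.mul measurable_snd)))
  have hTinv : Function.Involutive T := by
    rintro ⟨x, z⟩
    simp only [hT, Prod.mk.injEq]
    constructor
    · linear_combination x * h
    · linear_combination z * h
  let e : (ℝ × ℝ) ≃ᵐ (ℝ × ℝ) := ⟨hTinv.toPerm, hTmeas, hTmeas⟩
  have hecoe : ⇑e = T := rfl
  have hesymm : ⇑e.symm = T := rfl
  -- volume invariance
  have hvol : ((volume : Measure ℝ).prod volume).map T = (volume : Measure ℝ).prod volume := by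
    rw [← Measure.volume_eq_prod]
    set L := Matrix.toLin (Module.Basis.finTwoProd ℝ) (Module.Basis.finTwoProd ℝ) !![a * r, a; a, -(a * r)]
      with hLdef
    have hLT : ⇑L = T := by
      funext q
      rw [hLdef, Matrix.toLin_finTwoProd_apply]
      simp only [hT, Prod.mk.injEq]
      constructor <;> ring
    have hdet : LinearMap.det L = -1 := by
      rw [hLdef, LinearMap.det_toLin, Matrix.det_fin_two_of]
      linear_combination -h
    rw [← hLT, Measure.map_linearMap_addHaar_eq_smul_addHaar _ (by rw [hdet]; norm_num), hdet]
    norm_num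
  -- density invariance
  have hD : ∀ q : ℝ × ℝ, gaussianPDF 0 1 (T q).1 * gaussianPDF 0 1 (T q).2
      = gaussianPDF 0 1 q.1 * gaussianPDF 0 1 q.2 := by
    rintro ⟨x, z⟩
    simp only [hT, gaussianPDF]
    rw [← ENNReal.ofReal_mul (gaussianPDFReal_nonneg 0 1 _),
      ← ENNReal.ofReal_mul (gaussianPDFReal_nonneg 0 1 _)]
    congr 1
    simp only [gaussianPDFReal]
    push_cast
    rw [mul_mul_mul_comm, ← Real.exp_add, mul_mul_mul_comm, ← Real.exp_add]
    congr 1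
    rw [Real.exp_eq_exp]
    linear_combination (-(x ^ 2 + z ^ 2) / 2) * h
  have hDmeas : Measurable fun q : ℝ × ℝ => gaussianPDF 0 1 q.1 * gaussianPDF 0 1 q.2 :=
    ((measurable_gaussianPDF 0 1).comp measurable_fst).mul
      ((measurable_gaussianPDF 0 1).comp measurable_snd)
  rw [gauss_prod, ← hecoe, map_equiv_withDensity e _ hDmeas, hecoe, hvol]
  congr 1
  funext y
  rw [show e.symm y = T y from congrFun hesymm y]
  exact hD y
/-- **MMPE of a scalar Gaussian input.**
For `X ~ N(0,1)` observed through `Y = √snr·X + Z` with `Z ~ N(0,1)` independent of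
`X`, and any `p ≥ 1`, the minimum mean `p`-th error
`mmpe(X, snr, p) = inf_f E[|X - f(Y)|^p]` equals `E[|Z|^p] / (1+snr)^(p/2)`, and the
infimum is achieved by the linear estimator `f(y) = (√snr/(1+snr)) y`. -/
theorem mmpe_gaussian_input
    {Ω : Type*} [MeasurableSpace Ω] (μ : Measure Ω) [IsProbabilityMeasure μ]
    (X Z : Ω → ℝ) (hX : Measurable X) (hZ : Measurable Z)
    (hXlaw : μ.map X = gaussianReal 0 1) (hZlaw : μ.map Z = gaussianReal 0 1)
    (hindep : IndepFun X Z μ)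
    (snr : ℝ) (hsnr : 0 < snr) (p : ℝ) (hp : 1 ≤ p)
    (Y : Ω → ℝ) (hY : Y = fun ω => Real.sqrt snr * X ω + Z ω) :
    (⨅ f : {f : ℝ → ℝ // Measurable f},
        ∫⁻ ω, (‖X ω - f.1 (Y ω)‖₊ : ENNReal) ^ p ∂μ)
      = ENNReal.ofReal ((∫ z, |z| ^ p ∂(gaussianReal 0 1)) / (1 + snr) ^ (p / 2)) ∧
    (∫⁻ ω, (‖X ω - (Real.sqrt snr / (1 + snr)) * Y ω‖₊ : ENNReal) ^ p ∂μ)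
      = ENNReal.ofReal ((∫ z, |z| ^ p ∂(gaussianReal 0 1)) / (1 + snr) ^ (p / 2)) := by
  have hp0 : (0:ℝ) ≤ p := le_trans zero_le_one hp
  set r := Real.sqrt snr with hrdef
  have hr2 : r ^ 2 = snr := Real.sq_sqrt hsnr.le
  have hs1 : (0:ℝ) < 1 + snr := by linarith
  set a := (Real.sqrt (1 + snr))⁻¹ with hadef
  have ha : 0 < a := inv_pos.2 (Real.sqrt_pos.2 hs1)
  have hsq : Real.sqrt (1 + snr) ^ 2 = 1 + snr := Real.sq_sqrt hs1.le
  have ha2 : a ^ 2 * (r ^ 2 + 1) = 1 := by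
    rw [hadef, inv_pow, hsq, hr2]
    field_simp
    ring
  -- new coordinates
  set U : Ω → ℝ := fun ω => a * (r * X ω + Z ω) with hUdef
  set V : Ω → ℝ := fun ω => a * (X ω - r * Z ω) with hVdef
  have hU : Measurable U := measurable_const.mul ((measurable_const.mul hX).add hZ)
  have hV : Measurable V := measurable_const.mul (hX.sub (measurable_const.mul hZ))
  have hXZ : μ.map (fun ω => (X ω, Z ω)) = (gaussianReal 0 1).prod (gaussianReal 0 1) := by
    rw [(indepFun_iff_map_prod_eq_prod_map_map hX.aemeasurable hZ.aemeasurable).mp hindep,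
      hXlaw, hZlaw]
  have hUV : μ.map (fun ω => (U ω, V ω)) = (gaussianReal 0 1).prod (gaussianReal 0 1) := by
    have hTmeas : Measurable (fun q : ℝ × ℝ => (a * (r * q.1 + q.2), a * (q.1 - r * q.2))) :=
      (measurable_const.mul ((measurable_const.mul measurable_fst).add measurable_snd)).prodMk
        (measurable_const.mul (measurable_fst.sub (measurable_const.mul measurable_snd)))
    have hcomp : (fun ω => (U ω, V ω))
        = (fun q : ℝ × ℝ => (a * (r * q.1 + q.2), a * (q.1 - r * q.2)))
          ∘ (fun ω => (X ω, Z ω)) := rfl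
    rw [hcomp, ← Measure.map_map hTmeas (hX.prodMk hZ), hXZ, rot_inv ha2]
  -- pointwise identities
  have hXuv : ∀ ω, X ω = a * (r * U ω + V ω) := by
    intro ω
    simp only [hUdef, hVdef]
    linear_combination (-(X ω)) * ha2
  have hYuv : ∀ ω, Y ω = U ω / a := by
    intro ω
    rw [hY]
    simp only [hUdef]
    field_simp
  -- law of V
  have hVlaw : μ.map V = gaussianReal 0 1 := by
    have h1 : μ.map V = (μ.map (fun ω => (U ω, V ω))).map Prod.snd := by
      rw [Measure.map_map measurable_snd (hU.prodMk hV)]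
      rfl
    rw [h1, hUV, Measure.map_snd_prod, measure_univ, one_smul]
  -- the value
  have hap : a ^ p = ((1 + snr) ^ (p / 2))⁻¹ := by
    rw [hadef, Real.sqrt_eq_rpow, ← Real.rpow_neg hs1.le, ← Real.rpow_mul hs1.le,
      ← Real.rpow_neg hs1.le]
    congr 1
    ring
  have hK : ∫⁻ v, (‖a * v‖₊ : ENNReal) ^ p ∂(gaussianReal 0 1)
      = ENNReal.ofReal ((∫ z, |z| ^ p ∂(gaussianReal 0 1)) / (1 + snr) ^ (p / 2)) := by
    rw [scale_val hp0 ha.le, hap, mul_comm, ← div_eq_mul_inv]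
  -- achievability
  have hach : ∫⁻ ω, (‖X ω - (r / (1 + snr)) * Y ω‖₊ : ENNReal) ^ p ∂μ
      = ENNReal.ofReal ((∫ z, |z| ^ p ∂(gaussianReal 0 1)) / (1 + snr) ^ (p / 2)) := by
    have hpt : ∀ ω, X ω - (r / (1 + snr)) * Y ω = a * V ω := by
      intro ω
      rw [hXuv ω, hYuv ω]
      have h1a : (1 + snr) * a ^ 2 = 1 := by rw [← hr2]; linear_combination ha2
      field_simp
      linear_combination (r * U ω) * h1a
    calc ∫⁻ ω, (‖X ω - (r / (1 + snr)) * Y ω‖₊ : ENNReal) ^ p ∂μ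
        = ∫⁻ ω, (‖a * V ω‖₊ : ENNReal) ^ p ∂μ := by
          congr 1; funext ω; rw [hpt ω]
      _ = ∫⁻ v, (‖a * v‖₊ : ENNReal) ^ p ∂(μ.map V) := by
          exact (lintegral_map
            (show Measurable fun v : ℝ => (‖a * v‖₊ : ENNReal) ^ p from
              ((measurable_const.mul measurable_id).enorm).pow_const p) hV).symm
      _ = ENNReal.ofReal ((∫ z, |z| ^ p ∂(gaussianReal 0 1)) / (1 + snr) ^ (p / 2)) := by
          rw [hVlaw, hK]
  -- lower bound
  have hlb : ∀ f : {f : ℝ → ℝ // Measurable f},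
      ENNReal.ofReal ((∫ z, |z| ^ p ∂(gaussianReal 0 1)) / (1 + snr) ^ (p / 2))
        ≤ ∫⁻ ω, (‖X ω - f.1 (Y ω)‖₊ : ENNReal) ^ p ∂μ := by
    rintro ⟨f, hf⟩
    set F : ℝ × ℝ → ENNReal :=
      fun q => (‖a * q.2 - (f (q.1 / a) - a * r * q.1)‖₊ : ENNReal) ^ p with hFdef
    have hFmeas : Measurable F := by
      apply Measurable.pow_const
      refine Measurable.coe_nnreal_ennreal (Measurable.nnnorm ?_)
      exact (measurable_const.mul measurable_snd).sub
        ((hf.comp (measurable_fst.div_const a)).sub (measurable_const.mul measurable_fst))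
    have hpt : ∀ ω, X ω - f (Y ω) = a * V ω - (f (U ω / a) - a * r * U ω) := by
      intro ω
      rw [hXuv ω, hYuv ω]
      ring
    calc ENNReal.ofReal ((∫ z, |z| ^ p ∂(gaussianReal 0 1)) / (1 + snr) ^ (p / 2))
        = ∫⁻ _ ,
            ENNReal.ofReal ((∫ z, |z| ^ p ∂(gaussianReal 0 1)) / (1 + snr) ^ (p / 2))
            ∂(gaussianReal 0 1) := by rw [lintegral_const, measure_univ, mul_one]
      _ ≤ ∫⁻ u, ∫⁻ v, F (u, v) ∂(gaussianReal 0 1) ∂(gaussianReal 0 1) := by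
          refine lintegral_mono fun u => ?_
          rw [← hK]
          exact sym_bound hp a (f (u / a) - a * r * u)
      _ = ∫⁻ q, F q ∂((gaussianReal 0 1).prod (gaussianReal 0 1)) :=
          (lintegral_prod F hFmeas.aemeasurable).symm
      _ = ∫⁻ ω, F (U ω, V ω) ∂μ := by
          rw [← hUV, lintegral_map hFmeas (hU.prodMk hV)]
      _ = ∫⁻ ω, (‖X ω - f (Y ω)‖₊ : ENNReal) ^ p ∂μ := by
          congr 1; funext ω
          rw [hFdef]
          simp only []
          rw [← hpt ω]
  constructor
  · refine le_antisymm ?_ (le_iInf hlb)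
    refine le_trans (iInf_le _ ⟨fun y => (r / (1 + snr)) * y, measurable_const.mul measurable_id⟩) ?_
    exact le_of_eq hach
  · exact hach
end

section
/- Higher-moment conditional-expectation error bound: for the channel Y = √snr·X + Z with Z standard normal independent of X, snr > 0, and p ≥ 2, E[|X - E[X|Y]|^p] ≤ 2^p E[|Z|^p] / snr^{p/2}. -/
open MeasureTheory ProbabilityTheory Set
open scoped ENNReal NNReal

lemma aux_integrable_abs_rpow_mul_exp_neg_mul_sq {b : ℝ} (hb : 0 < b) {s : ℝ} (hs : -1 < s) :
    Integrable fun x : ℝ => |x| ^ s * Real.exp (-b * x ^ 2) := by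
  have hIoi : IntegrableOn (fun x : ℝ => |x| ^ s * Real.exp (-b * x ^ 2)) (Ioi 0) :=
    (integrableOn_rpow_mul_exp_neg_mul_sq hb hs).congr_fun
      (fun x hx => by rw [abs_of_pos hx]) measurableSet_Ioi
  rw [← integrableOn_univ, ← @Iio_union_Ici _ _ (0 : ℝ), integrableOn_union,
    integrableOn_Ici_iff_integrableOn_Ioi]
  refine ⟨?_, hIoi⟩
  rw [← (Measure.measurePreserving_neg (volume : Measure ℝ)).integrableOn_comp_preimage
      (Homeomorph.neg ℝ).measurableEmbedding]
  simpa only [Function.comp_def, neg_sq, neg_preimage, neg_Iio, neg_neg, neg_zero, abs_neg]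
    using hIoi

lemma aux_gaussian_moment {p : ℝ} (hp : 0 ≤ p) :
    Integrable (fun z : ℝ => |z| ^ p) (gaussianReal 0 1) := by
  rw [gaussianReal_of_var_ne_zero 0 one_ne_zero,
    integrable_withDensity_iff (measurable_gaussianPDF 0 1)
      (ae_of_all _ fun x => ENNReal.ofReal_lt_top)]
  have htor : ∀ x : ℝ, (gaussianPDF 0 1 x).toReal = gaussianPDFReal 0 1 x := fun x =>
    ENNReal.toReal_ofReal (gaussianPDFReal_nonneg 0 1 x)
  simp only [htor, gaussianPDFReal]
  have h := (aux_integrable_abs_rpow_mul_exp_neg_mul_sq (b := 2⁻¹) (by norm_num) (s := p)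
    (by linarith)).const_mul (Real.sqrt (2 * Real.pi * ((1 : ℝ≥0) : ℝ)))⁻¹
  refine h.congr (ae_of_all _ fun x => ?_)
  have harg : -(2⁻¹ : ℝ) * x ^ 2 = -(x - 0) ^ 2 / (2 * ((1 : ℝ≥0) : ℝ)) := by
    push_cast; ring
  dsimp only
  rw [harg]
  ring

lemma aux_memℒp_of_integrable_abs_rpow {α : Type*} [MeasurableSpace α] {ν : Measure α}
    {f : α → ℝ} (hf : AEStronglyMeasurable f ν) {p : ℝ} (hp : 0 < p)
    (h : Integrable (fun x => |f x| ^ p) ν) : MemLp f (ENNReal.ofReal p) ν := by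
  have hp'0 : ENNReal.ofReal p ≠ 0 := by
    simp only [ne_eq, ENNReal.ofReal_eq_zero, not_le]; linarith
  have hp't : ENNReal.ofReal p ≠ ∞ := ENNReal.ofReal_ne_top
  refine (memLp_norm_rpow_iff hf hp'0 hp't).mp ?_
  rw [ENNReal.div_self hp'0 hp't, memLp_one_iff_integrable]
  refine h.congr (ae_of_all _ fun x => ?_)
  simp [ENNReal.toReal_ofReal hp.le, Real.norm_eq_abs]

lemma aux_eLpNorm_eq {α : Type*} [MeasurableSpace α] {ν : Measure α} {f : α → ℝ} {p : ℝ}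
    (hp : 0 < p) (hf : MemLp f (ENNReal.ofReal p) ν) :
    eLpNorm f (ENNReal.ofReal p) ν = ENNReal.ofReal ((∫ x, |f x| ^ p ∂ν) ^ p⁻¹) := by
  rw [hf.eLpNorm_eq_integral_rpow_norm
    (by simp only [ne_eq, ENNReal.ofReal_eq_zero, not_le]; linarith) ENNReal.ofReal_ne_top]
  simp [ENNReal.toReal_ofReal hp.le, Real.norm_eq_abs]

lemma aux_integral_eq {α : Type*} [MeasurableSpace α] {ν : Measure α} {f : α → ℝ} {p : ℝ}
    (hp : 0 < p) (hf : MemLp f (ENNReal.ofReal p) ν) :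
    ∫ x, |f x| ^ p ∂ν = ((eLpNorm f (ENNReal.ofReal p) ν).toReal) ^ p := by
  have hnn : 0 ≤ ∫ x, |f x| ^ p ∂ν :=
    integral_nonneg fun x => Real.rpow_nonneg (abs_nonneg _) _
  rw [aux_eLpNorm_eq hp hf, ENNReal.toReal_ofReal (Real.rpow_nonneg hnn _),
    ← Real.rpow_mul hnn, inv_mul_cancel₀ hp.ne', Real.rpow_one]

lemma aux_jensen_abs_rpow {ν : Measure ℝ} [IsProbabilityMeasure ν] {p : ℝ} (hp : 1 ≤ p)
    (h : Integrable (fun z => |z| ^ p) ν) :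
    |∫ z, z ∂ν| ^ p ≤ ∫ z, |z| ^ p ∂ν := by
  have hp0 : (0 : ℝ) < p := lt_of_lt_of_le one_pos hp
  have hnn : 0 ≤ ∫ z, |z| ^ p ∂ν :=
    integral_nonneg fun z => Real.rpow_nonneg (abs_nonneg _) _
  have hmem : MemLp (fun z : ℝ => z) (ENNReal.ofReal p) ν :=
    aux_memℒp_of_integrable_abs_rpow aestronglyMeasurable_id hp0 h
  have hp'1 : (1 : ℝ≥0∞) ≤ ENNReal.ofReal p := by
    rw [← ENNReal.ofReal_one]; exact ENNReal.ofReal_le_ofReal hp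
  have hmem1 : MemLp (fun z : ℝ => z) 1 ν := hmem.mono_exponent hp'1
  have h1 : |∫ z, z ∂ν| ≤ ∫ z, |z| ∂ν := by
    simpa [Real.norm_eq_abs] using norm_integral_le_integral_norm (μ := ν) (fun z : ℝ => z)
  have hle := eLpNorm_le_eLpNorm_of_exponent_le (μ := ν) (f := fun z : ℝ => z) hp'1
    (aestronglyMeasurable_id : AEStronglyMeasurable (fun z : ℝ => z) ν)
  have e1 : eLpNorm (fun z : ℝ => z) 1 ν = ENNReal.ofReal (∫ z, |z| ∂ν) := by
    rw [hmem1.eLpNorm_eq_integral_rpow_norm one_ne_zero ENNReal.one_ne_top]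
    simp [Real.norm_eq_abs]
  rw [e1, aux_eLpNorm_eq hp0 hmem] at hle
  have h2 : ∫ z, |z| ∂ν ≤ (∫ z, |z| ^ p ∂ν) ^ p⁻¹ :=
    (ENNReal.ofReal_le_ofReal_iff (Real.rpow_nonneg hnn _)).mp hle
  calc |∫ z, z ∂ν| ^ p ≤ ((∫ z, |z| ^ p ∂ν) ^ p⁻¹) ^ p :=
        Real.rpow_le_rpow (abs_nonneg _) (h1.trans h2) hp0.le
    _ = ∫ z, |z| ^ p ∂ν := by
        rw [← Real.rpow_mul hnn, inv_mul_cancel₀ hp0.ne', Real.rpow_one]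

/-- **Higher-moment bound on the conditional-expectation error.**
For `Y = √snr·X + Z` with `Z ~ N(0,1)` independent of `X`, `E[X²] < ∞`, `snr > 0`
and `p ≥ 2`: `E[|X - E[X|Y]|^p] ≤ 2^p E[|Z|^p] / snr^(p/2)`. -/
theorem condexp_error_higher_moment_bound
    {Ω : Type*} [MeasurableSpace Ω] (μ : Measure Ω) [IsProbabilityMeasure μ]
    (X Z : Ω → ℝ) (hX : Measurable X) (hZ : Measurable Z)
    (hX2 : MemLp X 2 μ)
    (hZlaw : μ.map Z = gaussianReal 0 1) (hindep : IndepFun X Z μ)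
    (snr : ℝ) (hsnr : 0 < snr) (p : ℝ) (hp : 2 ≤ p)
    (Y : Ω → ℝ) (hY : Y = fun ω => Real.sqrt snr * X ω + Z ω) :
    ∫ ω, |X ω - (μ[X | MeasurableSpace.comap Y (borel ℝ)]) ω| ^ p ∂μ
      ≤ 2 ^ p * (∫ z, |z| ^ p ∂(gaussianReal 0 1)) / snr ^ (p / 2) := by
  rw [show (borel ℝ) = Real.measurableSpace from rfl]
  have hp0 : (0 : ℝ) < p := by linarith
  have hp1 : (1 : ℝ) ≤ p := by linarith
  set p' : ℝ≥0∞ := ENNReal.ofReal p with hp'_def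
  have hp'0 : p' ≠ 0 := by
    simp only [hp'_def, ne_eq, ENNReal.ofReal_eq_zero, not_le]; linarith
  have hp't : p' ≠ ∞ := ENNReal.ofReal_ne_top
  have hp'1 : (1 : ℝ≥0∞) ≤ p' := by
    rw [hp'_def, ← ENNReal.ofReal_one]; exact ENNReal.ofReal_le_ofReal hp1
  have hYmeas : Measurable Y := by rw [hY]; exact (hX.const_mul _).add hZ
  have hm : MeasurableSpace.comap Y Real.measurableSpace ≤ ‹MeasurableSpace Ω› :=
    measurable_iff_comap_le.mp hYmeas
  have hs0 : (0 : ℝ) < Real.sqrt snr := Real.sqrt_pos.mpr hsnr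
  have habs_cont : Continuous fun z : ℝ => |z| ^ p :=
    continuous_abs.rpow_const (fun z => Or.inr hp0.le)
  have habs2_cont : Continuous fun q : ℝ × ℝ => |q.2| ^ p := habs_cont.comp continuous_snd
  have hZp_int : Integrable (fun ω => |Z ω| ^ p) μ := by
    have h := (integrable_map_measure habs_cont.aestronglyMeasurable hZ.aemeasurable).mp
      (by rw [hZlaw]; exact aux_gaussian_moment hp0.le)
    simpa [Function.comp_def] using h
  have hZint_eq : ∫ ω, |Z ω| ^ p ∂μ = ∫ z, |z| ^ p ∂(gaussianReal 0 1) := by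
    rw [← hZlaw, integral_map hZ.aemeasurable habs_cont.aestronglyMeasurable]
  have hZmem : MemLp Z p' μ :=
    aux_memℒp_of_integrable_abs_rpow hZ.aestronglyMeasurable hp0 hZp_int
  have hZint : Integrable Z μ := memLp_one_iff_integrable.mp (hZmem.mono_exponent hp'1)
  have hXint : Integrable X μ := hX2.integrable one_le_two
  have hYint : Integrable Y μ := by rw [hY]; exact (hXint.const_mul _).add hZint
  set W : Ω → ℝ := fun ω => ∫ z, z ∂(condDistrib Z Y μ (Y ω)) with hW_def
  have hcondZ : μ[Z|MeasurableSpace.comap Y Real.measurableSpace] =ᵐ[μ] W := condExp_ae_eq_integral_condDistrib' hYmeas hZint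
  have hW_aesm : AEStronglyMeasurable W μ :=
    (stronglyMeasurable_condExp.mono hm).aestronglyMeasurable.congr hcondZ
  -- the key algebraic identity
  have hXrepr : X = (Real.sqrt snr)⁻¹ • (Y - Z) := by
    funext ω
    simp only [Pi.smul_apply, Pi.sub_apply, smul_eq_mul, hY]
    field_simp
    ring
  have hcond : μ[X|MeasurableSpace.comap Y Real.measurableSpace] =ᵐ[μ] fun ω => (Real.sqrt snr)⁻¹ * (Y ω - W ω) := by
    have h1 : μ[X|MeasurableSpace.comap Y Real.measurableSpace] =ᵐ[μ] (Real.sqrt snr)⁻¹ • μ[Y - Z|MeasurableSpace.comap Y Real.measurableSpace] := by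
      rw [hXrepr]; exact condExp_smul _ _ _
    have h2 : μ[Y - Z|MeasurableSpace.comap Y Real.measurableSpace] =ᵐ[μ] μ[Y|MeasurableSpace.comap Y Real.measurableSpace] - μ[Z|MeasurableSpace.comap Y Real.measurableSpace] := condExp_sub hYint hZint _
    have h3 : μ[Y|MeasurableSpace.comap Y Real.measurableSpace] =ᵐ[μ] Y :=
      Filter.EventuallyEq.of_eq <| condExp_of_stronglyMeasurable hm
      ((measurable_iff_comap_le.mpr le_rfl : Measurable[MeasurableSpace.comap Y Real.measurableSpace] Y).stronglyMeasurable) hYint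
    filter_upwards [h1, h2, h3, hcondZ] with ω e1 e2 e3 e4
    simp only [e1, Pi.smul_apply, smul_eq_mul, e2, Pi.sub_apply, e3, e4]
  have hdiff : (fun ω => X ω - (μ[X|MeasurableSpace.comap Y Real.measurableSpace]) ω) =ᵐ[μ]
      fun ω => (Real.sqrt snr)⁻¹ * (W ω - Z ω) := by
    filter_upwards [hcond] with ω e
    rw [e]
    simp only [hY]
    field_simp
    ring
  have hsnr_pow : (Real.sqrt snr) ^ p = snr ^ (p / 2) := by
    rw [Real.sqrt_eq_rpow, ← Real.rpow_mul hsnr.le, show (1 / 2 : ℝ) * p = p / 2 by ring]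
  have hcongr : (fun ω => |X ω - (μ[X|MeasurableSpace.comap Y Real.measurableSpace]) ω| ^ p) =ᵐ[μ]
      fun ω => |W ω - Z ω| ^ p / snr ^ (p / 2) := by
    filter_upwards [hdiff] with ω e
    rw [e, abs_mul, abs_of_nonneg (inv_nonneg.mpr hs0.le),
      Real.mul_rpow (inv_nonneg.mpr hs0.le) (abs_nonneg _),
      Real.inv_rpow hs0.le, hsnr_pow, inv_mul_eq_div]
  -- integrability via disintegration
  set ρ : Measure (ℝ × ℝ) := μ.map (fun ω => (Y ω, Z ω)) with hρ_def
  have hρint : Integrable (fun q : ℝ × ℝ => |q.2| ^ p) ρ := by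
    rw [hρ_def, integrable_map_measure habs2_cont.aestronglyMeasurable
      (hYmeas.prodMk hZ).aemeasurable]
    simpa [Function.comp_def] using hZp_int
  have hae_int : ∀ᵐ ω ∂μ, Integrable (fun z => |z| ^ p) (condDistrib Z Y μ (Y ω)) :=
    Integrable.condDistrib_ae (f := fun q : ℝ × ℝ => |q.2| ^ p)
      hYmeas.aemeasurable hZ.aemeasurable hρint
  have hjensen : ∀ᵐ ω ∂μ, |W ω| ^ p ≤ ∫ z, |z| ^ p ∂(condDistrib Z Y μ (Y ω)) := by
    filter_upwards [hae_int] with ω hi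
    exact aux_jensen_abs_rpow hp1 hi
  have hg_int : Integrable (fun ω => ∫ z, |z| ^ p ∂(condDistrib Z Y μ (Y ω))) μ :=
    Integrable.integral_condDistrib (f := fun q : ℝ × ℝ => |q.2| ^ p)
      hYmeas.aemeasurable hZ.aemeasurable hρint
  have hWp_int : Integrable (fun ω => |W ω| ^ p) μ := by
    refine Integrable.mono' hg_int (habs_cont.comp_aestronglyMeasurable hW_aesm) ?_
    filter_upwards [hjensen] with ω hω
    rw [Real.norm_eq_abs, abs_of_nonneg (Real.rpow_nonneg (abs_nonneg _) _)]
    exact hω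
  have hWZ : ∫ ω, |W ω| ^ p ∂μ ≤ ∫ ω, |Z ω| ^ p ∂μ := by
    have step1 : ∫ ω, |W ω| ^ p ∂μ
        ≤ ∫ ω, ∫ z, |z| ^ p ∂(condDistrib Z Y μ (Y ω)) ∂μ :=
      integral_mono_ae hWp_int hg_int hjensen
    have hfst : ρ.fst = μ.map Y := Measure.fst_map_prodMk₀ hZ.aemeasurable
    have hasm : AEStronglyMeasurable
        (fun y => ∫ z, |z| ^ p ∂(condDistrib Z Y μ y)) (μ.map Y) :=
      AEStronglyMeasurable.integral_condDistrib_map hZ.aemeasurable hρint.1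
    have hker : condDistrib Z Y μ = ρ.condKernel := by rw [condDistrib_def]
    have key : ∫ y, ∫ z, |z| ^ p ∂(ρ.condKernel y) ∂ρ.fst = ∫ q : ℝ × ℝ, |q.2| ^ p ∂ρ :=
      Measure.integral_condKernel hρint
    rw [hfst, ← hker] at key
    have step2 : ∫ ω, ∫ z, |z| ^ p ∂(condDistrib Z Y μ (Y ω)) ∂μ = ∫ ω, |Z ω| ^ p ∂μ := by
      calc ∫ ω, ∫ z, |z| ^ p ∂(condDistrib Z Y μ (Y ω)) ∂μ
          = ∫ y, ∫ z, |z| ^ p ∂(condDistrib Z Y μ y) ∂(μ.map Y) :=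
            (integral_map hYmeas.aemeasurable hasm).symm
        _ = ∫ q : ℝ × ℝ, |q.2| ^ p ∂ρ := key
        _ = ∫ ω, |Z ω| ^ p ∂μ := by
            rw [hρ_def, integral_map (hYmeas.prodMk hZ).aemeasurable
              habs2_cont.aestronglyMeasurable]
    linarith
  have hWmem : MemLp W p' μ := aux_memℒp_of_integrable_abs_rpow hW_aesm hp0 hWp_int
  have heW : eLpNorm W p' μ ≤ eLpNorm Z p' μ := by
    rw [hp'_def, aux_eLpNorm_eq hp0 (hp'_def ▸ hWmem), aux_eLpNorm_eq hp0 (hp'_def ▸ hZmem)]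
    exact ENNReal.ofReal_le_ofReal (Real.rpow_le_rpow
      (integral_nonneg fun ω => Real.rpow_nonneg (abs_nonneg _) _) hWZ (by positivity))
  have hWZmem : MemLp (W - Z) p' μ := hWmem.sub hZmem
  have htri : eLpNorm (W - Z) p' μ ≤ eLpNorm W p' μ + eLpNorm Z p' μ :=
    eLpNorm_sub_le hW_aesm hZ.aestronglyMeasurable hp'1
  have hZ_ne : eLpNorm Z p' μ ≠ ∞ := hZmem.2.ne
  have hbound : (eLpNorm (W - Z) p' μ).toReal ≤ 2 * (eLpNorm Z p' μ).toReal := by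
    have h2' : eLpNorm (W - Z) p' μ ≤ eLpNorm Z p' μ + eLpNorm Z p' μ :=
      htri.trans (add_le_add_left heW _)
    have h3' := ENNReal.toReal_mono (ENNReal.add_ne_top.mpr ⟨hZ_ne, hZ_ne⟩) h2'
    rw [ENNReal.toReal_add hZ_ne hZ_ne] at h3'
    linarith
  have hIWZ : ∫ ω, |W ω - Z ω| ^ p ∂μ = ((eLpNorm (W - Z) p' μ).toReal) ^ p := by
    have h := aux_integral_eq hp0 (hp'_def ▸ hWZmem)
    rw [hp'_def]
    simpa [Pi.sub_apply] using h
  have hZfin : ((eLpNorm Z p' μ).toReal) ^ p = ∫ z, |z| ^ p ∂(gaussianReal 0 1) :=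
    ((aux_integral_eq hp0 (hp'_def ▸ hZmem)).symm.trans hZint_eq)
  have hmain : ∫ ω, |W ω - Z ω| ^ p ∂μ ≤ 2 ^ p * ∫ z, |z| ^ p ∂(gaussianReal 0 1) := by
    rw [hIWZ, ← hZfin]
    calc ((eLpNorm (W - Z) p' μ).toReal) ^ p ≤ (2 * (eLpNorm Z p' μ).toReal) ^ p :=
          Real.rpow_le_rpow ENNReal.toReal_nonneg hbound hp0.le
      _ = 2 ^ p * ((eLpNorm Z p' μ).toReal) ^ p :=
          Real.mul_rpow (by norm_num) ENNReal.toReal_nonneg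
  calc ∫ ω, |X ω - (μ[X|MeasurableSpace.comap Y Real.measurableSpace]) ω| ^ p ∂μ
      = ∫ ω, |W ω - Z ω| ^ p / snr ^ (p / 2) ∂μ := integral_congr_ae hcongr
    _ = (∫ ω, |W ω - Z ω| ^ p ∂μ) / snr ^ (p / 2) := integral_div _ _
    _ ≤ (2 ^ p * ∫ z, |z| ^ p ∂(gaussianReal 0 1)) / snr ^ (p / 2) :=
        (div_le_div_iff_of_pos_right (by positivity)).mpr hmain
end

section
/- Continuity of MMPE in the order: for fixed X and snr > 0, the map p ↦ mmpe(X, snr, p) = inf_f E[|X - f(Y)|^p] is continuous on (0, ∞). -/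
open MeasureTheory ProbabilityTheory Filter Real Set
open scoped ENNReal NNReal Topology

/-- rpow with varying exponent, fixed finite positive base. -/
lemma aux_rpow_tendsto_exponent {ι : Type*} {l : Filter ι} {u : ι → ℝ} {t : ℝ}
    (x : ℝ≥0∞) (hx0 : x ≠ 0) (hxt : x ≠ ⊤) (hu : Tendsto u l (𝓝 t)) :
    Tendsto (fun i => x ^ u i) l (𝓝 (x ^ t)) := by
  have hr : 0 < x.toReal := ENNReal.toReal_pos hx0 hxt
  have hx : x = ENNReal.ofReal x.toReal := (ENNReal.ofReal_toReal hxt).symm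
  have h1 : Tendsto (fun i => (x.toReal, u i)) l (𝓝 (x.toReal, t)) :=
    tendsto_const_nhds.prodMk_nhds hu
  have h2 : Tendsto (fun i => x.toReal ^ u i) l (𝓝 (x.toReal ^ t)) :=
    (Real.continuousAt_rpow _ (Or.inl hr.ne')).tendsto.comp h1
  have h3 := (ENNReal.continuous_ofReal.tendsto _).comp h2
  simpa [Function.comp_def, ← ENNReal.ofReal_rpow_of_pos hr, ← hx] using h3

/-- rpow with varying exponent tending to a positive limit, arbitrary base. -/
lemma aux_tendsto_rpow_within (x : ℝ≥0∞) {q : ℝ} (hq : 0 < q) :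
    Tendsto (fun p : ℝ => x ^ p) (𝓝[Set.Ioi (0:ℝ)] q) (𝓝 (x ^ q)) := by
  rcases eq_or_ne x 0 with rfl | hx0
  · have h0 : ∀ᶠ p in 𝓝[Set.Ioi (0:ℝ)] q, (0:ℝ≥0∞) = (0:ℝ≥0∞) ^ p := by
      filter_upwards [eventually_mem_nhdsWithin] with p hp
      exact (ENNReal.zero_rpow_of_pos hp).symm
    rw [ENNReal.zero_rpow_of_pos hq]
    exact Tendsto.congr' h0 tendsto_const_nhds
  rcases eq_or_ne x ⊤ with rfl | hxt
  · have h0 : ∀ᶠ p in 𝓝[Set.Ioi (0:ℝ)] q, (⊤:ℝ≥0∞) = (⊤:ℝ≥0∞) ^ p := by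
      filter_upwards [eventually_mem_nhdsWithin] with p hp
      exact (ENNReal.top_rpow_of_pos hp).symm
    rw [ENNReal.top_rpow_of_pos hq]
    exact Tendsto.congr' h0 tendsto_const_nhds
  exact aux_rpow_tendsto_exponent x hx0 hxt (tendsto_id.mono_left nhdsWithin_le_nhds)

/-- Clamping decreases the distance to points inside the window. -/
lemma aux_clamp₁ {x g t c : ℝ} (h : |x - g| ≤ c) :
    |x - max (g - c) (min t (g + c))| ≤ |x - t| := by
  rw [abs_le] at h
  have h2 := le_abs_self (x - t)
  have h3 := neg_abs_le (x - t)
  rcases min_cases t (g + c) with ⟨hm, hm'⟩ | ⟨hm, hm'⟩ <;> rw [hm]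
  · rcases max_cases (g - c) t with ⟨hM, hM'⟩ | ⟨hM, hM'⟩ <;> rw [hM] <;>
      rw [abs_le] <;> constructor <;> linarith
  · rcases max_cases (g - c) (g + c) with ⟨hM, hM'⟩ | ⟨hM, hM'⟩ <;> rw [hM] <;>
      rw [abs_le] <;> constructor <;> linarith

/-- The clamped value is within `c` of the center. -/
lemma aux_clamp₂ {g t : ℝ} (x : ℝ) {c : ℝ} (hc : 0 ≤ c) :
    |x - max (g - c) (min t (g + c))| ≤ |x - g| + c := by
  have h2 := le_abs_self (x - g)
  have h3 := neg_abs_le (x - g)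
  rcases min_cases t (g + c) with ⟨hm, hm'⟩ | ⟨hm, hm'⟩ <;> rw [hm]
  · rcases max_cases (g - c) t with ⟨hM, hM'⟩ | ⟨hM, hM'⟩ <;> rw [hM] <;>
      rw [abs_le] <;> constructor <;> linarith
  · rcases max_cases (g - c) (g + c) with ⟨hM, hM'⟩ | ⟨hM, hM'⟩ <;> rw [hM] <;>
      rw [abs_le] <;> constructor <;> linarith

lemma aux_gauss_fin {Ω : Type*} [MeasurableSpace Ω] (μ : Measure Ω) (Z : Ω → ℝ)
    (hZ : Measurable Z) (hZlaw : μ.map Z = gaussianReal 0 1)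
    {a b r : ℝ} (ha : 0 ≤ a) (hb : 0 ≤ b) (hr : 0 ≤ r) :
    ∫⁻ ω, ENNReal.ofReal (a + b * |Z ω|) ^ r ∂μ ≠ ∞ := by
  have hmeas : Measurable (fun x : ℝ => ENNReal.ofReal (a + b * |x|) ^ r) :=
    ((measurable_const.add (measurable_const.mul measurable_abs)).ennreal_ofReal).pow
      measurable_const
  have h1 : ∫⁻ ω, ENNReal.ofReal (a + b * |Z ω|) ^ r ∂μ
      = ∫⁻ x, ENNReal.ofReal (a + b * |x|) ^ r ∂(gaussianReal 0 1) := by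
    rw [← hZlaw, lintegral_map hmeas hZ]
  rw [h1, gaussianReal_of_var_ne_zero 0 one_ne_zero,
    lintegral_withDensity_eq_lintegral_mul _ (measurable_gaussianPDF 0 1) hmeas]
  set C : ℝ := (a + b) ^ r * Real.exp (r ^ 2) with hC
  have hptwise : ∀ x : ℝ,
      gaussianPDFReal 0 1 x * (a + b * |x|) ^ r ≤ C * Real.exp (-(4⁻¹) * x ^ 2) := by
    intro x
    have hxa : (0:ℝ) ≤ |x| := abs_nonneg x
    have hpdf : gaussianPDFReal 0 1 x ≤ Real.exp (-(x ^ 2) / 2) := by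
      rw [gaussianPDFReal]
      have h2π : (1:ℝ) ≤ Real.sqrt (2 * π * (1:ℝ≥0)) := by
        rw [show ((1:ℝ≥0):ℝ) = 1 by norm_num, mul_one]
        rw [show (1:ℝ) = Real.sqrt 1 by simp]
        exact Real.sqrt_le_sqrt (by nlinarith [Real.pi_gt_three])
      have hinv : (Real.sqrt (2 * π * (1:ℝ≥0)))⁻¹ ≤ 1 := by
        rw [inv_le_one_iff₀]; right; exact h2π
      calc (√(2 * π * (1:ℝ≥0)))⁻¹ * Real.exp (-(x - 0) ^ 2 / (2 * (1:ℝ≥0)))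
          ≤ 1 * Real.exp (-(x - 0) ^ 2 / (2 * (1:ℝ≥0))) := by
            apply mul_le_mul_of_nonneg_right hinv (Real.exp_nonneg _)
        _ = Real.exp (-(x ^ 2) / 2) := by norm_num
    have hbase : (a + b * |x|) ^ r ≤ (a + b) ^ r * Real.exp (r * |x|) := by
      have h4 : a + b * |x| ≤ (a + b) * Real.exp |x| := by
        have h5 : (1:ℝ) + |x| ≤ Real.exp |x| := by
          have := Real.add_one_le_exp |x|; linarith
        nlinarith [Real.exp_nonneg |x|]
      calc (a + b * |x|) ^ r ≤ ((a + b) * Real.exp |x|) ^ r :=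
            Real.rpow_le_rpow (by positivity) h4 hr
        _ = (a + b) ^ r * Real.exp |x| ^ r :=
            Real.mul_rpow (by positivity) (Real.exp_nonneg _)
        _ = (a + b) ^ r * Real.exp (|x| * r) := by rw [Real.exp_mul]
        _ = (a + b) ^ r * Real.exp (r * |x|) := by rw [mul_comm |x| r]
    have hexp : Real.exp (r * |x|) * Real.exp (-(x ^ 2) / 2)
        ≤ Real.exp (r ^ 2) * Real.exp (-(4⁻¹) * x ^ 2) := by
      rw [← Real.exp_add, ← Real.exp_add]
      apply Real.exp_le_exp.2
      nlinarith [sq_nonneg (r - |x| / 2), sq_abs x]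
    have hpdf0 : 0 ≤ gaussianPDFReal 0 1 x := gaussianPDFReal_nonneg 0 1 x
    calc gaussianPDFReal 0 1 x * (a + b * |x|) ^ r
        ≤ Real.exp (-(x ^ 2) / 2) * ((a + b) ^ r * Real.exp (r * |x|)) := by
          apply mul_le_mul hpdf hbase (by positivity) (Real.exp_nonneg _)
      _ = (a + b) ^ r * (Real.exp (r * |x|) * Real.exp (-(x ^ 2) / 2)) := by ring
      _ ≤ (a + b) ^ r * (Real.exp (r ^ 2) * Real.exp (-(4⁻¹) * x ^ 2)) := by
          apply mul_le_mul_of_nonneg_left hexp (by positivity)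
      _ = C * Real.exp (-(4⁻¹) * x ^ 2) := by rw [hC]; ring
  have hbound : ∀ x : ℝ, (gaussianPDF 0 1 * fun x => ENNReal.ofReal (a + b * |x|) ^ r) x
      ≤ ENNReal.ofReal (C * Real.exp (-(4⁻¹) * x ^ 2)) := by
    intro x
    have : (gaussianPDF 0 1 * fun x => ENNReal.ofReal (a + b * |x|) ^ r) x
        = ENNReal.ofReal (gaussianPDFReal 0 1 x * (a + b * |x|) ^ r) := by
      rw [Pi.mul_apply, gaussianPDF,
        ENNReal.ofReal_rpow_of_nonneg (by positivity) hr,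
        ← ENNReal.ofReal_mul (gaussianPDFReal_nonneg 0 1 x)]
    rw [this]
    exact ENNReal.ofReal_le_ofReal (hptwise x)
  have hint : Integrable (fun x : ℝ => C * Real.exp (-(4⁻¹) * x ^ 2)) :=
    (integrable_exp_neg_mul_sq (by norm_num : (0:ℝ) < 4⁻¹)).const_mul C
  refine ne_of_lt (lt_of_le_of_lt (lintegral_mono hbound) ?_)
  exact hint.lintegral_lt_top

/-- Lyapunov-type interpolation for lintegrals of rpow. -/
lemma aux_interp {Ω : Type*} [MeasurableSpace Ω] (μ : Measure Ω) (A : Ω → ℝ≥0∞)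
    (hA : Measurable A) {p r lam : ℝ} (hp : 0 ≤ p) (hr : 0 ≤ r)
    (hlam : 0 < lam) (hlam1 : lam < 1) :
    ∫⁻ ω, A ω ^ (lam * p + (1 - lam) * r) ∂μ ≤
      (∫⁻ ω, A ω ^ p ∂μ) ^ lam * (∫⁻ ω, A ω ^ r ∂μ) ^ (1 - lam) := by
  have h1lam : 0 < 1 - lam := by linarith
  have hconj : (1 / lam).HolderConjugate (1 / (1 - lam)) :=
    Real.holderConjugate_one_div hlam h1lam (by ring)
  have H := ENNReal.lintegral_mul_le_Lp_mul_Lq μ hconj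
    (f := fun ω => A ω ^ (lam * p)) (g := fun ω => A ω ^ ((1 - lam) * r))
    ((hA.pow measurable_const).aemeasurable) ((hA.pow measurable_const).aemeasurable)
  have e1 : ∀ ω, (fun ω => A ω ^ (lam * p)) ω * (fun ω => A ω ^ ((1 - lam) * r)) ω
      = A ω ^ (lam * p + (1 - lam) * r) := by
    intro ω
    exact (ENNReal.rpow_add_of_nonneg _ _ (by positivity) (by positivity)).symm
  have e2 : ∀ ω, (A ω ^ (lam * p)) ^ (1 / lam) = A ω ^ p := by
    intro ω
    rw [← ENNReal.rpow_mul]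
    congr 1
    field_simp
  have e3 : ∀ ω, (A ω ^ ((1 - lam) * r)) ^ (1 / (1 - lam)) = A ω ^ r := by
    intro ω
    rw [← ENNReal.rpow_mul]
    congr 1
    field_simp
  calc ∫⁻ ω, A ω ^ (lam * p + (1 - lam) * r) ∂μ
      = ∫⁻ ω, (fun ω => A ω ^ (lam * p)) ω * (fun ω => A ω ^ ((1 - lam) * r)) ω ∂μ :=
        lintegral_congr fun ω => (e1 ω).symm
    _ ≤ (∫⁻ ω, (A ω ^ (lam * p)) ^ (1 / lam) ∂μ) ^ (1 / (1 / lam)) *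
        (∫⁻ ω, (A ω ^ ((1 - lam) * r)) ^ (1 / (1 - lam)) ∂μ) ^ (1 / (1 / (1 - lam))) := H
    _ = (∫⁻ ω, A ω ^ p ∂μ) ^ lam * (∫⁻ ω, A ω ^ r ∂μ) ^ (1 - lam) := by
        rw [one_div_one_div, one_div_one_div]
        congr 1
        · congr 1; exact lintegral_congr e2
        · congr 1; exact lintegral_congr e3

/-- Monotonicity of `p ↦ ‖·‖_p` on a probability space, lintegral form. -/
lemma aux_mono {Ω : Type*} [MeasurableSpace Ω] (μ : Measure Ω) [IsProbabilityMeasure μ]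
    (A : Ω → ℝ≥0∞) (hA : Measurable A) {p q : ℝ} (hq : 0 < q) (hqp : q ≤ p) :
    ∫⁻ ω, A ω ^ q ∂μ ≤ (∫⁻ ω, A ω ^ p ∂μ) ^ (q / p) := by
  rcases eq_or_lt_of_le hqp with rfl | hlt
  · rw [div_self hq.ne', ENNReal.rpow_one]
  have hp : 0 < p := hq.trans hlt
  have hqp1 : 0 < q / p := by positivity
  have hqp2 : q / p < 1 := by rw [div_lt_one hp]; exact hlt
  have h1 : 0 < 1 - q / p := by linarith
  have hconj : (1 / (q / p)).HolderConjugate (1 / (1 - q / p)) :=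
    Real.holderConjugate_one_div hqp1 h1 (by ring)
  have H := ENNReal.lintegral_mul_le_Lp_mul_Lq μ hconj
    (f := fun ω => A ω ^ q) (g := fun _ => (1:ℝ≥0∞))
    ((hA.pow measurable_const).aemeasurable) aemeasurable_const
  have e2 : ∀ ω, (A ω ^ q) ^ (1 / (q / p)) = A ω ^ p := by
    intro ω
    rw [← ENNReal.rpow_mul]
    congr 1
    field_simp
  calc ∫⁻ ω, A ω ^ q ∂μ
      = ∫⁻ ω, (fun ω => A ω ^ q) ω * (fun _ => (1:ℝ≥0∞)) ω ∂μ := by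
        simp
    _ ≤ (∫⁻ ω, (A ω ^ q) ^ (1 / (q / p)) ∂μ) ^ (1 / (1 / (q / p))) *
        (∫⁻ ω, (1:ℝ≥0∞) ^ (1 / (1 - q / p)) ∂μ) ^ (1 / (1 / (1 - q / p))) := H
    _ = (∫⁻ ω, A ω ^ p ∂μ) ^ (q / p) := by
        rw [one_div_one_div, one_div_one_div]
        have : ∫⁻ ω, (1:ℝ≥0∞) ^ (1 / (1 - q / p)) ∂μ = 1 := by
          simp
        rw [this, ENNReal.one_rpow, mul_one]
        congr 1
        exact lintegral_congr e2
/-- **Continuity of the MMPE in the order `p`.**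
For fixed `X` and `snr > 0`, with `Y = √snr·X + Z`, `Z ~ N(0,1)` independent of `X`,
the map `p ↦ mmpe(X, snr, p) = inf_f E[|X - f(Y)|^p]` is continuous on `(0, ∞)`. -/
theorem mmpe_continuous_in_order
    {Ω : Type*} [MeasurableSpace Ω] (μ : Measure Ω) [IsProbabilityMeasure μ]
    (X Z : Ω → ℝ) (hX : Measurable X) (hZ : Measurable Z)
    (hZlaw : μ.map Z = gaussianReal 0 1) (hindep : IndepFun X Z μ)
    (snr : ℝ) (hsnr : 0 < snr)
    (Y : Ω → ℝ) (hY : Y = fun ω => Real.sqrt snr * X ω + Z ω) :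
    ContinuousOn
      (fun p : ℝ => ⨅ f : {f : ℝ → ℝ // Measurable f},
        ∫⁻ ω, (‖X ω - f.1 (Y ω)‖₊ : ENNReal) ^ p ∂μ)
      (Set.Ioi (0 : ℝ)) := by
  intro q hq
  have hq0 : 0 < q := hq
  have hLne : (𝓝[Set.Ioi (0:ℝ)] q).NeBot :=
    mem_closure_iff_nhdsWithin_neBot.1 (subset_closure hq)
  set s : ℝ := Real.sqrt snr with hs_def
  have hs : 0 < s := Real.sqrt_pos.2 hsnr
  have hYm : Measurable Y := by rw [hY]; exact (measurable_const.mul hX).add hZ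
  set L := 𝓝[Set.Ioi (0:ℝ)] q with hL
  set G : (ℝ → ℝ) → ℝ → ℝ≥0∞ :=
    fun f p => ∫⁻ ω, (‖X ω - f (Y ω)‖₊ : ℝ≥0∞) ^ p ∂μ with hGdef
  set M : ℝ → ℝ≥0∞ := fun p => ⨅ f : {f : ℝ → ℝ // Measurable f}, G f.1 p with hMdef
  show Tendsto M L (𝓝 (M q))
  -- basic measurability and identities
  have hEm : ∀ f : ℝ → ℝ, Measurable f →
      Measurable (fun ω => (‖X ω - f (Y ω)‖₊ : ℝ≥0∞)) := fun f hf =>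
    (hX.sub (hf.comp hYm)).nnnorm.coe_nnreal_ennreal
  have hnorm : ∀ (ω : Ω) (f : ℝ → ℝ),
      (‖X ω - f (Y ω)‖₊ : ℝ≥0∞) = ENNReal.ofReal |X ω - f (Y ω)| := fun ω f =>
    Real.enorm_eq_ofReal_abs _
  set g0 : ℝ → ℝ := fun y => y / s with hg0def
  have hg0m : Measurable g0 := measurable_id.div_const s
  have hXg0 : ∀ ω, |X ω - g0 (Y ω)| = 1 / s * |Z ω| := by
    intro ω
    have h1 : X ω - g0 (Y ω) = -(Z ω) / s := by
      simp only [hg0def, hY, ← hs_def]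
      field_simp
      ring
    rw [h1, abs_div, abs_neg, abs_of_pos hs, one_div, inv_mul_eq_div]
  have hfin : ∀ {a b r : ℝ}, 0 ≤ a → 0 ≤ b → 0 ≤ r →
      ∫⁻ ω, ENNReal.ofReal (a + b * |Z ω|) ^ r ∂μ ≠ ∞ :=
    fun ha hb hr => aux_gauss_fin μ Z hZ hZlaw ha hb hr
  have hMleG : ∀ (p : ℝ) (f : {f : ℝ → ℝ // Measurable f}), M p ≤ G f.1 p :=
    fun p f => iInf_le _ f
  have hMfin : ∀ p : ℝ, 0 ≤ p → M p ≠ ∞ := by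
    intro p hp
    have h1 : G g0 p = ∫⁻ ω, ENNReal.ofReal (0 + 1 / s * |Z ω|) ^ p ∂μ := by
      apply lintegral_congr; intro ω
      rw [hnorm, hXg0, zero_add]
    have h2 : G g0 p ≠ ∞ := by rw [h1]; exact hfin le_rfl (by positivity) hp
    exact ne_top_of_le_ne_top h2 (hMleG p ⟨g0, hg0m⟩)
  -- clamped estimators
  set cl : ℝ → (ℝ → ℝ) → ℝ → ℝ :=
    fun c f y => max (g0 y - c) (min (f y) (g0 y + c)) with hcl
  have hclm : ∀ (c : ℝ) (f : ℝ → ℝ), Measurable f → Measurable (cl c f) := by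
    intro c f hf
    exact (hg0m.sub measurable_const).max (hf.min (hg0m.add measurable_const))
  have hP2 : ∀ (c : ℝ), 0 ≤ c → ∀ (f : ℝ → ℝ) (ω : Ω),
      (‖X ω - cl c f (Y ω)‖₊ : ℝ≥0∞) ≤ ENNReal.ofReal (c + 1 / s * |Z ω|) := by
    intro c hc f ω
    rw [hnorm]
    apply ENNReal.ofReal_le_ofReal
    calc |X ω - cl c f (Y ω)| ≤ |X ω - g0 (Y ω)| + c := by
          simp only [hcl]; exact aux_clamp₂ _ hc
      _ = c + 1 / s * |Z ω| := by rw [hXg0]; ring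
  set T : ℝ → Set Ω := fun c => {ω : Ω | c < 1 / s * |Z ω|} with hT
  have hTm : ∀ c : ℝ, MeasurableSet (T c) := by
    intro c
    simp only [hT]
    exact measurableSet_lt measurable_const (measurable_const.mul hZ.abs)
  have hP1 : ∀ (c : ℝ), 1 ≤ c → ∀ (p : ℝ), 0 ≤ p → p ≤ q + 1 → ∀ (f : ℝ → ℝ) (ω : Ω),
      (‖X ω - cl c f (Y ω)‖₊ : ℝ≥0∞) ^ p ≤ (‖X ω - f (Y ω)‖₊ : ℝ≥0∞) ^ p +
        (T c).indicator (fun ω => ENNReal.ofReal (2 * (1 / s * |Z ω|)) ^ (q + 1)) ω := by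
    intro c hc p hp hpq1 f ω
    by_cases hmem : ω ∈ T c
    · rw [Set.indicator_of_mem hmem]
      refine le_add_left ?_
      have hWgt : c < 1 / s * |Z ω| := hmem
      calc (‖X ω - cl c f (Y ω)‖₊ : ℝ≥0∞) ^ p
          ≤ ENNReal.ofReal (2 * (1 / s * |Z ω|)) ^ p := by
            apply ENNReal.rpow_le_rpow _ hp
            exact (hP2 c (by linarith) f ω).trans (ENNReal.ofReal_le_ofReal (by linarith))
        _ ≤ ENNReal.ofReal (2 * (1 / s * |Z ω|)) ^ (q + 1) := by
            apply ENNReal.rpow_le_rpow_of_exponent_le _ hpq1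
            rw [ENNReal.one_le_ofReal]
            linarith
    · rw [Set.indicator_of_notMem hmem, add_zero]
      have hWle : 1 / s * |Z ω| ≤ c := not_lt.1 hmem
      apply ENNReal.rpow_le_rpow _ hp
      rw [hnorm ω (cl c f), hnorm ω f]
      apply ENNReal.ofReal_le_ofReal
      simp only [hcl]
      apply aux_clamp₁
      rw [hXg0]; exact hWle
  set Dn : ℕ → ℝ≥0∞ := fun n => ∫⁻ ω, (T n).indicator
      (fun ω => ENNReal.ofReal (2 * (1 / s * |Z ω|)) ^ (q + 1)) ω ∂μ with hDn
  have hDlim : Tendsto Dn atTop (𝓝 0) := by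
    have h0 : (𝓝 (0:ℝ≥0∞)) = 𝓝 (∫⁻ _ω, (0:ℝ≥0∞) ∂μ) := by simp
    rw [h0]
    apply tendsto_lintegral_of_dominated_convergence
      (fun ω => ENNReal.ofReal (0 + 2 / s * |Z ω|) ^ (q + 1))
    · intro n
      exact Measurable.indicator
        (((measurable_const.mul hZ.abs).const_mul 2).ennreal_ofReal.pow measurable_const) (hTm n)
    · intro n
      apply ae_of_all
      intro ω
      refine le_trans (Set.indicator_le_self _ _ ω) ?_
      apply le_of_eq
      have he : 2 * (1 / s * |Z ω|) = 0 + 2 / s * |Z ω| := by ring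
      rw [he]
    · exact hfin le_rfl (by positivity) (by linarith)
    · apply ae_of_all
      intro ω
      obtain ⟨N, hN⟩ := exists_nat_ge (1 / s * |Z ω|)
      have hev : ∀ᶠ n : ℕ in atTop, (0:ℝ≥0∞) = (T (n:ℝ)).indicator
          (fun ω => ENNReal.ofReal (2 * (1 / s * |Z ω|)) ^ (q + 1)) ω := by
        filter_upwards [eventually_ge_atTop N] with n hn
        refine (Set.indicator_of_notMem ?_ _).symm
        simp only [hT, Set.mem_setOf_eq, not_lt]
        calc 1 / s * |Z ω| ≤ (N:ℝ) := hN
          _ ≤ (n:ℝ) := Nat.cast_le.2 hn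
      exact Tendsto.congr' hev tendsto_const_nhds
  have hGcl : ∀ (n : ℕ), 1 ≤ (n:ℝ) → ∀ (p : ℝ), 0 ≤ p → p ≤ q + 1 →
      ∀ (f : ℝ → ℝ), Measurable f → G (cl n f) p ≤ G f p + Dn n := by
    intro n hn p hp hpq f hf
    calc G (cl n f) p ≤ ∫⁻ ω, ((‖X ω - f (Y ω)‖₊ : ℝ≥0∞) ^ p +
          (T n).indicator (fun ω => ENNReal.ofReal (2 * (1 / s * |Z ω|)) ^ (q + 1)) ω) ∂μ :=
        lintegral_mono fun ω => hP1 n hn p hp hpq f ω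
      _ = G f p + Dn n := by
        rw [lintegral_add_left ((hEm f hf).pow measurable_const)]
  -- upper semicontinuity
  have hUsc : Filter.limsup M L ≤ M q := by
    apply ENNReal.le_of_forall_pos_le_add
    intro ε hε _
    have hεne : (ε:ℝ≥0∞) ≠ 0 := by exact_mod_cast hε.ne'
    have hε2 : ((ε:ℝ≥0∞)/2) ≠ 0 := by
      simp [ENNReal.div_eq_zero_iff, hεne]
    obtain ⟨f, hflt⟩ : ∃ f : {f : ℝ → ℝ // Measurable f}, G f.1 q < M q + (ε:ℝ≥0∞) / 2 := by
      have h1 : M q < M q + (ε:ℝ≥0∞) / 2 := ENNReal.lt_add_right (hMfin q hq0.le) hε2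
      rw [hMdef] at h1
      simp only at h1
      exact iInf_lt_iff.1 h1
    obtain ⟨n, hn1, hnD⟩ : ∃ n : ℕ, 1 ≤ (n:ℝ) ∧ Dn n < (ε:ℝ≥0∞) / 2 := by
      have h1 := hDlim.eventually_lt_const (pos_iff_ne_zero.2 hε2)
      have h2 : ∀ᶠ n : ℕ in atTop, 1 ≤ (n:ℝ) := by
        filter_upwards [eventually_ge_atTop 1] with n hn
        exact_mod_cast hn
      exact (h2.and h1).exists
    have hf2m : Measurable (cl n f.1) := hclm n f.1 f.2
    have hG2q : G (cl n f.1) q ≤ M q + ε := by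
      calc G (cl n f.1) q ≤ G f.1 q + Dn n := hGcl n hn1 q hq0.le (by linarith) f.1 f.2
        _ ≤ (M q + (ε:ℝ≥0∞) / 2) + (ε:ℝ≥0∞) / 2 := add_le_add hflt.le hnD.le
        _ = M q + ε := by rw [add_assoc, ENNReal.add_halves]
    have hG2cont : Tendsto (fun p => G (cl n f.1) p) L (𝓝 (G (cl n f.1) q)) := by
      apply tendsto_lintegral_filter_of_dominated_convergence
        (fun ω => ENNReal.ofReal (1 + n + 1 / s * |Z ω|) ^ (q + 1))
      · exact Eventually.of_forall fun p => (hEm _ hf2m).pow measurable_const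
      · have hmemIoo : ∀ᶠ p in L, p ∈ Set.Ioo (0:ℝ) (q+1) := by
          rw [hL]
          exact eventually_nhdsWithin_of_eventually_nhds
            (isOpen_Ioo.eventually_mem ⟨hq0, by linarith⟩)
        filter_upwards [hmemIoo] with p hp
        apply ae_of_all
        intro ω
        have hx : (‖X ω - cl n f.1 (Y ω)‖₊ : ℝ≥0∞) ≤ ENNReal.ofReal ((n:ℝ) + 1 / s * |Z ω|) :=
          hP2 n (by linarith) f.1 ω
        have hstep : ∀ x : ℝ≥0∞, x ^ p ≤ (1 + x) ^ (q + 1) := by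
          intro x
          rcases le_total x 1 with h | h
          · calc x ^ p ≤ (1:ℝ≥0∞) ^ p := ENNReal.rpow_le_rpow h hp.1.le
              _ = 1 := ENNReal.one_rpow p
              _ = (1:ℝ≥0∞) ^ (q+1) := (ENNReal.one_rpow _).symm
              _ ≤ (1 + x) ^ (q+1) := ENNReal.rpow_le_rpow le_self_add (by linarith)
          · calc x ^ p ≤ x ^ (q+1) := ENNReal.rpow_le_rpow_of_exponent_le h hp.2.le
              _ ≤ (1 + x) ^ (q+1) := ENNReal.rpow_le_rpow le_add_self (by linarith)
        calc (‖X ω - cl n f.1 (Y ω)‖₊ : ℝ≥0∞) ^ p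
            ≤ (1 + (‖X ω - cl n f.1 (Y ω)‖₊ : ℝ≥0∞)) ^ (q+1) := hstep _
          _ ≤ ENNReal.ofReal (1 + n + 1 / s * |Z ω|) ^ (q + 1) := by
            apply ENNReal.rpow_le_rpow _ (by linarith)
            calc 1 + (‖X ω - cl n f.1 (Y ω)‖₊ : ℝ≥0∞)
                ≤ 1 + ENNReal.ofReal ((n:ℝ) + 1 / s * |Z ω|) := add_le_add_right hx _
              _ = ENNReal.ofReal (1 + ((n:ℝ) + 1 / s * |Z ω|)) := by
                rw [ENNReal.ofReal_add zero_le_one (by positivity : (0:ℝ) ≤ (n:ℝ) + 1 / s * |Z ω|), ENNReal.ofReal_one]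
              _ = ENNReal.ofReal (1 + n + 1 / s * |Z ω|) := by rw [← add_assoc]
      · exact hfin (a := 1 + (n:ℝ)) (b := 1 / s) (by positivity) (by positivity) (by linarith)
      · apply ae_of_all
        intro ω
        exact aux_tendsto_rpow_within _ hq0
    calc Filter.limsup M L ≤ Filter.limsup (fun p => G (cl n f.1) p) L :=
        Filter.limsup_le_limsup (Eventually.of_forall fun p => hMleG p ⟨cl n f.1, hf2m⟩)
      _ = G (cl n f.1) q := hG2cont.limsup_eq
      _ ≤ M q + ε := hG2q
  -- lower semicontinuity
  have hLsc : M q ≤ Filter.liminf M L := by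
    refine (le_liminf_iff (by isBoundedDefault) (by isBoundedDefault)).2 ?_
    intro b hb
    have hMqfin : M q ≠ ∞ := hMfin q hq0.le
    have hbtop : b ≠ ∞ := (hb.trans (lt_top_iff_ne_top.2 hMqfin)).ne
    obtain ⟨ε₁, hε₁, hvlt⟩ := ENNReal.lt_iff_exists_add_pos_lt.1 hb
    set v : ℝ≥0∞ := b + ε₁ with hv
    have hv0 : v ≠ 0 := by
      rw [hv]
      simp only [ne_eq, add_eq_zero, not_and]
      intro _
      exact_mod_cast hε₁.ne'
    have hvtop : v ≠ ∞ := (hvlt.trans (lt_top_iff_ne_top.2 hMqfin)).ne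
    set εh : ℝ≥0∞ := (ε₁ : ℝ≥0∞) / 2 with hεh
    have hεh0 : εh ≠ 0 := by
      rw [hεh]
      simp [ENNReal.div_eq_zero_iff]
      exact_mod_cast hε₁.ne'
    obtain ⟨n, hn1, hnD⟩ : ∃ n : ℕ, 1 ≤ (n:ℝ) ∧ Dn n < εh := by
      have h1 := hDlim.eventually_lt_const (pos_iff_ne_zero.2 hεh0)
      have h2 : ∀ᶠ n : ℕ in atTop, 1 ≤ (n:ℝ) := by
        filter_upwards [eventually_ge_atTop 1] with n hn
        exact_mod_cast hn
      exact (h2.and h1).exists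
    set B : ℝ≥0∞ := ∫⁻ ω, ENNReal.ofReal ((n:ℝ) + 1 / s * |Z ω|) ^ (q+1) ∂μ with hB
    have hBtop : B ≠ ∞ := hfin (by positivity) (by positivity) (by linarith)
    have hB1 : (1:ℝ≥0∞) ≤ B := by
      have h0 : (1:ℝ≥0∞) = ∫⁻ _ω, (1:ℝ≥0∞) ∂μ := by simp
      rw [h0, hB]
      apply lintegral_mono
      intro ω
      have h1 : (1:ℝ≥0∞) = ENNReal.ofReal 1 ^ (q+1) := by
        rw [ENNReal.ofReal_one, ENNReal.one_rpow]
      rw [h1]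
      apply ENNReal.rpow_le_rpow _ (by linarith)
      apply ENNReal.ofReal_le_ofReal
      have : 0 ≤ 1 / s * |Z ω| := by positivity
      linarith
    have hB0 : B ≠ 0 := fun h => by simp [h] at hB1
    have hgetf : ∀ p : ℝ, M p ≤ b →
        ∃ f : {f : ℝ → ℝ // Measurable f}, G f.1 p < b + εh := by
      intro p hMpb
      have h1 : M p < b + εh := lt_of_le_of_lt hMpb (ENNReal.lt_add_right hbtop hεh0)
      rw [hMdef] at h1
      simp only at h1
      exact iInf_lt_iff.1 h1
    have h_left : ∀ p : ℝ, 0 < p → p < q → M p ≤ b →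
        M q ≤ v ^ (1 / (1 + q - p)) * B ^ (1 - 1 / (1 + q - p)) := by
      intro p hp hpq hMpb
      obtain ⟨f, hflt⟩ := hgetf p hMpb
      have hden : 0 < 1 + q - p := by linarith
      have hlam0 : 0 < 1 / (1 + q - p) := by positivity
      have hlam1 : 1 / (1 + q - p) < 1 := by rw [div_lt_one hden]; linarith
      have hcomb : (1 / (1 + q - p)) * p + (1 - 1 / (1 + q - p)) * (q + 1) = q := by
        field_simp
        ring
      have hAm : Measurable (fun ω => (‖X ω - cl n f.1 (Y ω)‖₊ : ℝ≥0∞)) :=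
        hEm _ (hclm n f.1 f.2)
      have h1 : M q ≤ ∫⁻ ω, (‖X ω - cl n f.1 (Y ω)‖₊ : ℝ≥0∞) ^ q ∂μ :=
        hMleG q ⟨cl n f.1, hclm n f.1 f.2⟩
      have h2 := aux_interp μ _ hAm hp.le (by linarith : (0:ℝ) ≤ q + 1) hlam0 hlam1
      rw [hcomb] at h2
      have h3 : ∫⁻ ω, (‖X ω - cl n f.1 (Y ω)‖₊ : ℝ≥0∞) ^ p ∂μ ≤ v := by
        calc ∫⁻ ω, (‖X ω - cl n f.1 (Y ω)‖₊ : ℝ≥0∞) ^ p ∂μ = G (cl n f.1) p := rfl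
          _ ≤ G f.1 p + Dn n := hGcl n hn1 p hp.le (by linarith) f.1 f.2
          _ ≤ (b + εh) + εh := add_le_add hflt.le hnD.le
          _ = v := by rw [hv, hεh, add_assoc, ENNReal.add_halves]
      have h4 : ∫⁻ ω, (‖X ω - cl n f.1 (Y ω)‖₊ : ℝ≥0∞) ^ (q+1) ∂μ ≤ B := by
        rw [hB]
        apply lintegral_mono
        intro ω
        exact ENNReal.rpow_le_rpow (hP2 n (by linarith) f.1 ω) (by linarith)
      calc M q ≤ ∫⁻ ω, (‖X ω - cl n f.1 (Y ω)‖₊ : ℝ≥0∞) ^ q ∂μ := h1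
        _ ≤ (∫⁻ ω, (‖X ω - cl n f.1 (Y ω)‖₊ : ℝ≥0∞) ^ p ∂μ) ^ (1 / (1 + q - p)) *
            (∫⁻ ω, (‖X ω - cl n f.1 (Y ω)‖₊ : ℝ≥0∞) ^ (q+1) ∂μ) ^ (1 - 1 / (1 + q - p)) := h2
        _ ≤ v ^ (1 / (1 + q - p)) * B ^ (1 - 1 / (1 + q - p)) :=
          mul_le_mul' (ENNReal.rpow_le_rpow h3 hlam0.le) (ENNReal.rpow_le_rpow h4 (by linarith))
    have h_right : ∀ p : ℝ, q ≤ p → M p ≤ b → M q ≤ v ^ (q / p) := by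
      intro p hp hMpb
      obtain ⟨f, hflt⟩ := hgetf p hMpb
      have h1 : M q ≤ ∫⁻ ω, (‖X ω - f.1 (Y ω)‖₊ : ℝ≥0∞) ^ q ∂μ := hMleG q f
      have h2 := aux_mono μ _ (hEm f.1 f.2) hq0 hp
      have h3 : G f.1 p ≤ v := by
        refine hflt.le.trans ?_
        rw [hv, hεh]
        exact add_le_add_right ENNReal.half_le_self b
      calc M q ≤ ∫⁻ ω, (‖X ω - f.1 (Y ω)‖₊ : ℝ≥0∞) ^ q ∂μ := h1
        _ ≤ (∫⁻ ω, (‖X ω - f.1 (Y ω)‖₊ : ℝ≥0∞) ^ p ∂μ) ^ (q / p) := h2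
        _ ≤ v ^ (q / p) := ENNReal.rpow_le_rpow h3 (div_nonneg hq0.le (hq0.trans_le hp).le)
    have hu1 : Tendsto (fun p : ℝ => 1 / (1 + q - p)) L (𝓝 1) := by
      have h1 : Tendsto (fun p : ℝ => 1 + q - p) (𝓝 q) (𝓝 1) := by
        have h2 : Continuous (fun p : ℝ => 1 + q - p) := continuous_const.sub continuous_id
        have h3 := h2.tendsto q
        have h4 : 1 + q - q = 1 := by ring
        rw [h4] at h3
        exact h3
      have h2 : Tendsto (fun p : ℝ => 1 / (1 + q - p)) (𝓝 q) (𝓝 1) := by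
        have h5 : Tendsto (fun p : ℝ => (1:ℝ) / (1 + q - p)) (𝓝 q) (𝓝 (1 / 1)) :=
          Tendsto.div tendsto_const_nhds h1 one_ne_zero
        simpa using h5
      exact h2.mono_left nhdsWithin_le_nhds
    have hT1 : Tendsto (fun p : ℝ => v ^ (1 / (1 + q - p))) L (𝓝 v) := by
      have := aux_rpow_tendsto_exponent v hv0 hvtop hu1
      simpa [ENNReal.rpow_one] using this
    have hT2 : Tendsto (fun p : ℝ => B ^ (1 - 1 / (1 + q - p))) L (𝓝 1) := by
      have hu2 : Tendsto (fun p : ℝ => 1 - 1 / (1 + q - p)) L (𝓝 0) := by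
        have h5 : Tendsto (fun p : ℝ => (1:ℝ) - 1 / (1 + q - p)) L (𝓝 (1 - 1)) :=
          Tendsto.sub tendsto_const_nhds hu1
        simpa using h5
      have := aux_rpow_tendsto_exponent B hB0 hBtop hu2
      simpa [ENNReal.rpow_zero] using this
    have hT12 : Tendsto (fun p : ℝ => v ^ (1 / (1 + q - p)) * B ^ (1 - 1 / (1 + q - p)))
        L (𝓝 v) := by
      have := ENNReal.Tendsto.mul hT1 (Or.inl hv0) hT2 (Or.inl one_ne_zero)
      simpa using this
    have hT3 : Tendsto (fun p : ℝ => v ^ (q / p)) L (𝓝 v) := by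
      have hu3 : Tendsto (fun p : ℝ => q / p) L (𝓝 1) := by
        have h1 : Tendsto (fun p : ℝ => q / p) (𝓝 q) (𝓝 (q / q)) :=
          tendsto_const_nhds.div tendsto_id hq0.ne'
        rw [div_self hq0.ne'] at h1
        exact h1.mono_left nhdsWithin_le_nhds
      have := aux_rpow_tendsto_exponent v hv0 hvtop hu3
      simpa [ENNReal.rpow_one] using this
    have hmax : Tendsto
        (fun p : ℝ => max (v ^ (1/(1+q-p)) * B ^ (1 - 1/(1+q-p))) (v ^ (q/p))) L (𝓝 v) := by
      have := hT12.max hT3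
      simpa [max_self] using this
    filter_upwards [hmax.eventually_lt_const hvlt, eventually_mem_nhdsWithin] with p hplt hpmem
    by_contra hcon
    push_neg at hcon
    have hpmem' : (0:ℝ) < p := hpmem
    rcases lt_or_ge p q with hpq | hpq
    · exact lt_irrefl (M q) (lt_of_le_of_lt (h_left p hpmem' hpq hcon)
        (lt_of_le_of_lt (le_max_left _ _) hplt))
    · exact lt_irrefl (M q) (lt_of_le_of_lt (h_right p hpq hcon)
        (lt_of_le_of_lt (le_max_right _ _) hplt))
  exact tendsto_of_le_liminf_of_limsup_le hLsc hUsc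
end

section
/- Change of measure for MMPE: for any real random variable X, any 0 < snr ≤ snr₀ and p > 0, mmpe(X, snr, p) = inf_f E[ |X - f(Y_{snr₀})|^p · √(snr/snr₀) · exp( ((snr₀ - snr)/(2 snr₀)) Z² ) ], where Y_{snr₀} = √snr₀ X + Z and Z ~ N(0,1) is independent of X. -/
open MeasureTheory ProbabilityTheory
open scoped NNReal

/-- **Change of measure for the MMPE.**
For any real random variable `X`, `0 < snr ≤ snr₀` and `p > 0`:
`mmpe(X, snr, p)
  = inf_f E[ |X - f(Y₀)|^p · √(snr/snr₀) · exp(((snr₀-snr)/(2snr₀)) Z²) ]`,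
where `Y₀ = √snr₀·X + Z`, `Z ~ N(0,1)` independent of `X`. -/
theorem mmpe_change_of_measure
    {Ω : Type*} [MeasurableSpace Ω] (μ : Measure Ω) [IsProbabilityMeasure μ]
    (X Z : Ω → ℝ) (hX : Measurable X) (hZ : Measurable Z)
    (hZlaw : μ.map Z = gaussianReal 0 1) (hindep : IndepFun X Z μ)
    (snr snr₀ : ℝ) (hsnr : 0 < snr) (hle : snr ≤ snr₀) (p : ℝ) (hp : 0 < p)
    (Y₀ : Ω → ℝ) (hY₀ : Y₀ = fun ω => Real.sqrt snr₀ * X ω + Z ω) :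
    (⨅ f : {f : ℝ → ℝ // Measurable f},
        ∫⁻ ω, (‖X ω - f.1 (Real.sqrt snr * X ω + Z ω)‖₊ : ENNReal) ^ p ∂μ)
      = ⨅ f : {f : ℝ → ℝ // Measurable f},
          ∫⁻ ω, (‖X ω - f.1 (Y₀ ω)‖₊ : ENNReal) ^ p *
            ENNReal.ofReal
              (Real.sqrt (snr / snr₀) *
                Real.exp (((snr₀ - snr) / (2 * snr₀)) * (Z ω) ^ 2)) ∂μ := by
  subst hY₀
  have hsnr₀ : 0 < snr₀ := hsnr.trans_le hle
  have hvpos : 0 < snr₀ / snr := div_pos hsnr₀ hsnr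
  set c : ℝ := Real.sqrt (snr₀ / snr) with hc_def
  have hc_pos : 0 < c := Real.sqrt_pos.mpr hvpos
  have hc_mul : c * Real.sqrt snr = Real.sqrt snr₀ := by
    rw [hc_def, ← Real.sqrt_mul hvpos.le, div_mul_cancel₀ _ hsnr.ne']
  set w : ℝ → ℝ := fun z =>
    Real.sqrt (snr / snr₀) * Real.exp (((snr₀ - snr) / (2 * snr₀)) * z ^ 2) with hw_def
  set v : ℝ≥0 := ⟨snr₀ / snr, hvpos.le⟩ with hv_def
  have hv_ne : v ≠ 0 := by
    rw [← NNReal.coe_ne_zero]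
    exact hvpos.ne'
  have hmeas_w : Measurable fun z : ℝ => ENNReal.ofReal (w z) := by
    apply Measurable.ennreal_ofReal
    exact measurable_const.mul ((measurable_const.mul (measurable_id.pow_const 2)).exp)
  -- pointwise density identity
  have hdens : ∀ z : ℝ, gaussianPDF 0 1 z * ENNReal.ofReal (w z) = gaussianPDF 0 v z := by
    intro z
    rw [gaussianPDF, gaussianPDF, ← ENNReal.ofReal_mul (gaussianPDFReal_nonneg _ _ _)]
    congr 1
    rw [gaussianPDFReal, gaussianPDFReal, hw_def]
    have hcoe : ((v : ℝ≥0) : ℝ) = snr₀ / snr := rfl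
    rw [hcoe]
    have hπ : (0:ℝ) ≤ 2 * Real.pi := by positivity
    have hcoeff : (Real.sqrt (2 * Real.pi * (1:ℝ≥0)))⁻¹ * Real.sqrt (snr / snr₀)
        = (Real.sqrt (2 * Real.pi * (snr₀ / snr)))⁻¹ := by
      rw [show ((1:ℝ≥0):ℝ) = (1:ℝ) from rfl, mul_one,
        Real.sqrt_mul hπ (snr₀ / snr), mul_inv]
      congr 1
      rw [← Real.sqrt_inv, inv_div]
    have hexp : Real.exp (-(z - 0) ^ 2 / (2 * ((1:ℝ≥0):ℝ)))
          * Real.exp ((snr₀ - snr) / (2 * snr₀) * z ^ 2)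
        = Real.exp (-(z - 0) ^ 2 / (2 * (snr₀ / snr))) := by
      rw [← Real.exp_add]
      congr 1
      rw [show ((1:ℝ≥0):ℝ) = (1:ℝ) from rfl]
      field_simp
      ring
    calc (Real.sqrt (2 * Real.pi * (1:ℝ≥0)))⁻¹ * Real.exp (-(z - 0) ^ 2 / (2 * ((1:ℝ≥0):ℝ)))
          * (Real.sqrt (snr / snr₀) * Real.exp ((snr₀ - snr) / (2 * snr₀) * z ^ 2))
        = ((Real.sqrt (2 * Real.pi * (1:ℝ≥0)))⁻¹ * Real.sqrt (snr / snr₀))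
            * (Real.exp (-(z - 0) ^ 2 / (2 * ((1:ℝ≥0):ℝ)))
              * Real.exp ((snr₀ - snr) / (2 * snr₀) * z ^ 2)) := by ring
      _ = (Real.sqrt (2 * Real.pi * (snr₀ / snr)))⁻¹
            * Real.exp (-(z - 0) ^ 2 / (2 * (snr₀ / snr))) := by rw [hcoeff, hexp]
  -- measure identity
  have hmeasure : (gaussianReal 0 1).withDensity (fun z => ENNReal.ofReal (w z))
      = (gaussianReal 0 1).map (fun z => c * z) := by
    have h1 : (gaussianReal 0 1).map (c * ·) = gaussianReal (c * 0) (⟨c ^ 2, sq_nonneg _⟩ * 1) :=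
      gaussianReal_map_const_mul c
    have h2 : (⟨c ^ 2, sq_nonneg _⟩ * 1 : ℝ≥0) = v := by
      apply NNReal.coe_injective
      show Real.sqrt (snr₀ / snr) ^ 2 * 1 = snr₀ / snr
      rw [mul_one]
      show Real.sqrt (snr₀ / snr) ^ 2 = snr₀ / snr
      exact Real.sq_sqrt hvpos.le
    rw [show (fun z : ℝ => c * z) = (c * ·) from rfl, h1, h2, mul_zero,
      gaussianReal_of_var_ne_zero _ one_ne_zero, gaussianReal_of_var_ne_zero _ hv_ne,
      ← withDensity_mul _ (measurable_gaussianPDF _ _) hmeas_w]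
    congr 1
    funext z
    exact hdens z
  -- joint law
  have hjoint : μ.map (fun ω => (X ω, Z ω)) = (μ.map X).prod (gaussianReal 0 1) := by
    rw [← hZlaw]
    exact (indepFun_iff_map_prod_eq_prod_map_map hX.aemeasurable hZ.aemeasurable).mp hindep
  -- key identity, for each measurable f
  have key : ∀ f : ℝ → ℝ, Measurable f →
      (∫⁻ ω, (‖X ω - f (Real.sqrt snr₀ * X ω + Z ω)‖₊ : ENNReal) ^ p
          * ENNReal.ofReal (w (Z ω)) ∂μ)
        = ∫⁻ ω, (‖X ω - f (c * (Real.sqrt snr * X ω + Z ω))‖₊ : ENNReal) ^ p ∂μ := by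
    intro f hf
    set F : ℝ × ℝ → ENNReal := fun q =>
      (‖q.1 - f (Real.sqrt snr₀ * q.1 + q.2)‖₊ : ENNReal) ^ p * ENNReal.ofReal (w q.2) with hF_def
    set G : ℝ × ℝ → ENNReal := fun q =>
      (‖q.1 - f (c * (Real.sqrt snr * q.1 + q.2))‖₊ : ENNReal) ^ p with hG_def
    have hFbase : Measurable fun q : ℝ × ℝ =>
        (‖q.1 - f (Real.sqrt snr₀ * q.1 + q.2)‖₊ : ENNReal) ^ p :=
      ENNReal.continuous_rpow_const.measurable.comp
        ((measurable_fst.sub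
          (hf.comp ((measurable_const.mul measurable_fst).add measurable_snd))).nnnorm.coe_nnreal_ennreal)
    have hFmeas : Measurable F := hFbase.mul (hmeas_w.comp measurable_snd)
    have hGmeas : Measurable G :=
      ENNReal.continuous_rpow_const.measurable.comp
        ((measurable_fst.sub
          (hf.comp (measurable_const.mul
            ((measurable_const.mul measurable_fst).add measurable_snd)))).nnnorm.coe_nnreal_ennreal)
    have hXZ : Measurable fun ω => (X ω, Z ω) := hX.prodMk hZ
    have hinner : ∀ x : ℝ,
        (∫⁻ z, F (x, z) ∂(gaussianReal 0 1)) = ∫⁻ z, G (x, z) ∂(gaussianReal 0 1) := by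
      intro x
      set g : ℝ → ENNReal := fun z =>
        (‖x - f (Real.sqrt snr₀ * x + z)‖₊ : ENNReal) ^ p with hg_def
      have hg : Measurable g :=
        ENNReal.continuous_rpow_const.measurable.comp
          ((measurable_const.sub (hf.comp (measurable_const.add measurable_id))).nnnorm.coe_nnreal_ennreal)
      calc (∫⁻ z, F (x, z) ∂(gaussianReal 0 1))
          = ∫⁻ z, ((fun z => ENNReal.ofReal (w z)) * g) z ∂(gaussianReal 0 1) := by
            simp only [hF_def, hg_def, Pi.mul_apply]
            exact lintegral_congr fun z => mul_comm _ _
        _ = ∫⁻ z, g z ∂((gaussianReal 0 1).withDensity fun z => ENNReal.ofReal (w z)) :=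
            (lintegral_withDensity_eq_lintegral_mul _ hmeas_w hg).symm
        _ = ∫⁻ z, g z ∂((gaussianReal 0 1).map fun z => c * z) := by rw [hmeasure]
        _ = ∫⁻ z, g (c * z) ∂(gaussianReal 0 1) := lintegral_map hg (measurable_const_mul c)
        _ = ∫⁻ z, G (x, z) ∂(gaussianReal 0 1) := by
            apply lintegral_congr fun z => ?_
            simp only [hg_def, hG_def]
            congr 3
            rw [← hc_mul]
            ring
    calc (∫⁻ ω, (‖X ω - f (Real.sqrt snr₀ * X ω + Z ω)‖₊ : ENNReal) ^ p
            * ENNReal.ofReal (w (Z ω)) ∂μ)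
        = ∫⁻ ω, F (X ω, Z ω) ∂μ := rfl
      _ = ∫⁻ q, F q ∂(μ.map fun ω => (X ω, Z ω)) := (lintegral_map hFmeas hXZ).symm
      _ = ∫⁻ q, F q ∂((μ.map X).prod (gaussianReal 0 1)) := by rw [hjoint]
      _ = ∫⁻ x, ∫⁻ z, F (x, z) ∂(gaussianReal 0 1) ∂(μ.map X) :=
          lintegral_prod F hFmeas.aemeasurable
      _ = ∫⁻ x, ∫⁻ z, G (x, z) ∂(gaussianReal 0 1) ∂(μ.map X) :=
          lintegral_congr fun x => hinner x
      _ = ∫⁻ q, G q ∂((μ.map X).prod (gaussianReal 0 1)) :=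
          (lintegral_prod G hGmeas.aemeasurable).symm
      _ = ∫⁻ q, G q ∂(μ.map fun ω => (X ω, Z ω)) := by rw [hjoint]
      _ = ∫⁻ ω, G (X ω, Z ω) ∂μ := lintegral_map hGmeas hXZ
      _ = ∫⁻ ω, (‖X ω - f (c * (Real.sqrt snr * X ω + Z ω))‖₊ : ENNReal) ^ p ∂μ := rfl
  refine le_antisymm (le_iInf fun f => ?_) (le_iInf fun f => ?_)
  · -- inf LHS ≤ RHS term f
    have h1 := key f.1 f.2
    refine iInf_le_of_le ⟨fun y => f.1 (c * y), f.2.comp (measurable_const_mul c)⟩ ?_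
    exact le_of_eq h1.symm
  · -- inf RHS ≤ LHS term f
    refine iInf_le_of_le ⟨fun y => f.1 (c⁻¹ * y), f.2.comp (measurable_const_mul c⁻¹)⟩ ?_
    have h1 := key (fun y => f.1 (c⁻¹ * y)) (f.2.comp (measurable_const_mul c⁻¹))
    rw [h1]
    apply le_of_eq
    apply lintegral_congr fun ω => ?_
    have hcc : c⁻¹ * (c * (Real.sqrt snr * X ω + Z ω)) = Real.sqrt snr * X ω + Z ω :=
      inv_mul_cancel_left₀ hc_pos.ne' _
    show (‖X ω - f.1 (c⁻¹ * (c * (Real.sqrt snr * X ω + Z ω)))‖₊ : ENNReal) ^ p = _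
    rw [hcc]
end

section
/- Conditioning on an extra observation increases SNR: for any real random variable X, p > 0, snr₀, Δ ≥ 0, if U = √Δ·X + Z_Δ with Z_Δ ~ N(0,1) independent of (X, Z), then inf_f E[|X - f(Y_{snr₀}, U)|^p] = mmpe(X, snr₀ + Δ, p); in particular mmpe(X, snr, p) is non-increasing in snr. -/
open MeasureTheory ProbabilityTheory Real

lemma gauss_prod_withDensity :
    (gaussianReal 0 1).prod (gaussianReal 0 1)
      = ((volume : Measure ℝ).prod volume).withDensity
          (fun p => gaussianPDF 0 1 p.1 * gaussianPDF 0 1 p.2) := by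
  refine Measure.prod_eq fun s t hs ht => ?_
  rw [withDensity_apply _ (hs.prod ht), ← Measure.prod_restrict,
    lintegral_prod_mul (measurable_gaussianPDF 0 1).aemeasurable
      (measurable_gaussianPDF 0 1).aemeasurable,
    ← withDensity_apply _ hs, ← withDensity_apply _ ht,
    ← gaussianReal_of_var_ne_zero 0 one_ne_zero]

lemma gaussianPDF_mul_rot {a b : ℝ} (hab : a ^ 2 + b ^ 2 = 1) (x y : ℝ) :
    gaussianPDF 0 1 (a * x + b * y) * gaussianPDF 0 1 (b * x - a * y)
      = gaussianPDF 0 1 x * gaussianPDF 0 1 y := by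
  have key : ∀ u v : ℝ, gaussianPDF 0 1 u * gaussianPDF 0 1 v
      = ENNReal.ofReal (((Real.sqrt (2 * π))⁻¹) ^ 2 * rexp (-(u ^ 2 + v ^ 2) / 2)) := by
    intro u v
    rw [gaussianPDF, gaussianPDF, gaussianPDFReal, gaussianPDFReal,
      ← ENNReal.ofReal_mul (by positivity)]
    congr 1
    simp only [NNReal.coe_one, mul_one, sub_zero]
    rw [show (√(2 * π))⁻¹ * rexp (-u ^ 2 / 2) * ((√(2 * π))⁻¹ * rexp (-v ^ 2 / 2))
        = ((√(2 * π))⁻¹) ^ 2 * (rexp (-u ^ 2 / 2) * rexp (-v ^ 2 / 2)) by ring,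
      ← Real.exp_add]
    ring_nf
  rw [key, key]
  congr 3
  linear_combination (- x ^ 2 - y ^ 2) / 2 * hab

lemma rot_measurePreserving {a b : ℝ} (hab : a ^ 2 + b ^ 2 = 1) :
    MeasurePreserving (fun p : ℝ × ℝ => (a * p.1 + b * p.2, b * p.1 - a * p.2))
      ((gaussianReal 0 1).prod (gaussianReal 0 1))
      ((gaussianReal 0 1).prod (gaussianReal 0 1)) := by
  set T : ℝ × ℝ → ℝ × ℝ := fun p => (a * p.1 + b * p.2, b * p.1 - a * p.2) with hTdef
  have hTm : Measurable T := by fun_prop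
  set L := Matrix.toLin (Module.Basis.finTwoProd ℝ) (Module.Basis.finTwoProd ℝ) !![a, b; b, -a] with hLdef
  have hdet : LinearMap.det L = -1 := by
    rw [hLdef, LinearMap.det_toLin, Matrix.det_fin_two_of]
    linear_combination -hab
  have hLT : ∀ p : ℝ × ℝ, L p = T p := by
    intro p
    rw [hLdef]
    rw [show p = (p.1, p.2) from rfl, Matrix.toLin_finTwoProd_apply]
    simp [hTdef]
    ring
  have hvol : Measure.map T (volume : Measure (ℝ × ℝ)) = volume := by
    have h1 : Measure.map L (volume : Measure (ℝ × ℝ))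
        = ENNReal.ofReal |(LinearMap.det L)⁻¹| • volume :=
      Measure.map_linearMap_addHaar_eq_smul_addHaar volume (by rw [hdet]; norm_num)
    rw [show T = fun p => L p from funext fun p => (hLT p).symm,
      show (fun p : ℝ × ℝ => L p) = ⇑L from rfl, h1, hdet]
    norm_num
  have hφm : Measurable (fun p : ℝ × ℝ => gaussianPDF 0 1 p.1 * gaussianPDF 0 1 p.2) :=
    ((measurable_gaussianPDF 0 1).comp measurable_fst).mul
      ((measurable_gaussianPDF 0 1).comp measurable_snd)
  refine ⟨hTm, ?_⟩
  rw [gauss_prod_withDensity]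
  ext s hs
  rw [Measure.map_apply hTm hs, withDensity_apply _ (hTm hs), withDensity_apply _ hs,
    ← lintegral_indicator (hTm hs) _, ← lintegral_indicator hs _]
  have hind : ∀ p : ℝ × ℝ, Set.indicator (T ⁻¹' s)
      (fun p : ℝ × ℝ => gaussianPDF 0 1 p.1 * gaussianPDF 0 1 p.2) p
      = Set.indicator s (fun p : ℝ × ℝ => gaussianPDF 0 1 p.1 * gaussianPDF 0 1 p.2) (T p) := by
    intro p
    classical
    rw [Set.indicator_apply, Set.indicator_apply, Set.mem_preimage]
    split
    · exact (gaussianPDF_mul_rot hab p.1 p.2).symm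
    · rfl
  calc ∫⁻ p, Set.indicator (T ⁻¹' s)
        (fun p : ℝ × ℝ => gaussianPDF 0 1 p.1 * gaussianPDF 0 1 p.2) p ∂(volume.prod volume)
      = ∫⁻ p, Set.indicator s
        (fun p : ℝ × ℝ => gaussianPDF 0 1 p.1 * gaussianPDF 0 1 p.2) (T p)
          ∂(volume.prod volume) := by simp_rw [hind]
    _ = ∫⁻ q, Set.indicator s
        (fun p : ℝ × ℝ => gaussianPDF 0 1 p.1 * gaussianPDF 0 1 p.2) q
          ∂(Measure.map T (volume.prod volume)) :=
        (lintegral_map (hφm.indicator hs) hTm).symm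
    _ = ∫⁻ q, Set.indicator s
        (fun p : ℝ × ℝ => gaussianPDF 0 1 p.1 * gaussianPDF 0 1 p.2) q
          ∂(volume.prod volume) := by
        rw [← Measure.volume_eq_prod, hvol]

/-- **An extra observation is equivalent to a higher SNR, and MMPE is non-increasing in SNR.**
For `U = √Δ·X + Z_Δ` with `Z_Δ ~ N(0,1)` independent of `(X, Z)`, the best `p`-th
error of estimating `X` from `(Y₀, U)` equals `mmpe(X, snr₀ + Δ, p)` (realized via the
maximal-ratio combination `Y' = √(snr₀+Δ)·X + (√snr₀·Z + √Δ·Z_Δ)/√(snr₀+Δ)`);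
in particular `mmpe(X, snr₀ + Δ, p) ≤ mmpe(X, snr₀, p)`. -/
theorem mmpe_extra_observation_and_monotone
    {Ω : Type*} [MeasurableSpace Ω] (μ : Measure Ω) [IsProbabilityMeasure μ]
    (X Z ZΔ : Ω → ℝ) (hX : Measurable X) (hZ : Measurable Z) (hZΔ : Measurable ZΔ)
    (hZlaw : μ.map Z = gaussianReal 0 1) (hZΔlaw : μ.map ZΔ = gaussianReal 0 1)
    (hindep : iIndepFun (m := fun _ : Fin 3 => (inferInstance : MeasurableSpace ℝ))
      ![X, Z, ZΔ] μ)
    (snr₀ Δ : ℝ) (hsnr₀ : 0 ≤ snr₀) (hΔ : 0 ≤ Δ) (p : ℝ) (hp : 0 < p)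
    (Y₀ U Y' : Ω → ℝ)
    (hY₀ : Y₀ = fun ω => Real.sqrt snr₀ * X ω + Z ω)
    (hU : U = fun ω => Real.sqrt Δ * X ω + ZΔ ω)
    (hY' : Y' = fun ω => Real.sqrt (snr₀ + Δ) * X ω +
      (Real.sqrt snr₀ * Z ω + Real.sqrt Δ * ZΔ ω) / Real.sqrt (snr₀ + Δ)) :
    (⨅ f : {f : ℝ × ℝ → ℝ // Measurable f},
        ∫⁻ ω, (‖X ω - f.1 (Y₀ ω, U ω)‖₊ : ENNReal) ^ p ∂μ)
      = (⨅ f : {f : ℝ → ℝ // Measurable f},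
          ∫⁻ ω, (‖X ω - f.1 (Y' ω)‖₊ : ENNReal) ^ p ∂μ) ∧
    (⨅ f : {f : ℝ → ℝ // Measurable f},
        ∫⁻ ω, (‖X ω - f.1 (Y' ω)‖₊ : ENNReal) ^ p ∂μ)
      ≤ ⨅ f : {f : ℝ → ℝ // Measurable f},
          ∫⁻ ω, (‖X ω - f.1 (Y₀ ω)‖₊ : ENNReal) ^ p ∂μ := by
  classical
  set γ : Measure ℝ := gaussianReal 0 1 with hγdef
  have hmeas3 : ∀ i, Measurable (![X, Z, ZΔ] i) := by
    intro i; fin_cases i <;> simpa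
  have hZZΔ : IndepFun Z ZΔ μ := by
    have h := hindep.indepFun (show (1 : Fin 3) ≠ 2 by decide)
    simpa using h
  have hpairX : IndepFun (fun ω => (Z ω, ZΔ ω)) X μ := by
    have h := hindep.indepFun_prodMk hmeas3 1 2 0 (by decide) (by decide)
    simpa using h
  have lawZZ : μ.map (fun ω => (Z ω, ZΔ ω)) = γ.prod γ := by
    rw [(indepFun_iff_map_prod_eq_prod_map_map hZ.aemeasurable hZΔ.aemeasurable).mp hZZΔ,
      hZlaw, hZΔlaw]
  set ν : Measure ℝ := μ.map X with hνdef
  haveI : IsProbabilityMeasure ν := Measure.isProbabilityMeasure_map hX.aemeasurable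
  have law3 : μ.map (fun ω => (X ω, (Z ω, ZΔ ω))) = ν.prod (γ.prod γ) := by
    rw [(indepFun_iff_map_prod_eq_prod_map_map hX.aemeasurable
      (hZ.prodMk hZΔ).aemeasurable).mp hpairX.symm, lawZZ]
  have transfer : ∀ G : ℝ × (ℝ × ℝ) → ENNReal, Measurable G →
      ∫⁻ ω, G (X ω, (Z ω, ZΔ ω)) ∂μ = ∫⁻ q, G q ∂(ν.prod (γ.prod γ)) := by
    intro G hG
    rw [← law3, lintegral_map hG (hX.prodMk (hZ.prodMk hZΔ))]
  -- the key inequality : the Y' infimum is below every (Y₀,U) estimator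
  have key : ∀ f : ℝ × ℝ → ℝ, Measurable f →
      (⨅ g : {g : ℝ → ℝ // Measurable g},
          ∫⁻ ω, (‖X ω - g.1 (Y' ω)‖₊ : ENNReal) ^ p ∂μ)
        ≤ ∫⁻ ω, (‖X ω - f (Y₀ ω, U ω)‖₊ : ENNReal) ^ p ∂μ := by
    rcases eq_or_lt_of_le (show (0:ℝ) ≤ snr₀ + Δ by positivity) with hzero | hpos
    · -- degenerate case : snr₀ = Δ = 0
      have h1 : snr₀ = 0 := by linarith
      have h2 : Δ = 0 := by linarith
      subst h1; subst h2
      simp only [Real.sqrt_zero, zero_mul, zero_add, add_zero, div_zero] at hY₀ hU hY'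
      intro f hf
      have hGm : Measurable (fun q : ℝ × (ℝ × ℝ) => (‖q.1 - f q.2‖₊ : ENNReal) ^ p) :=
        ((measurable_fst.sub (hf.comp measurable_snd)).nnnorm.coe_nnreal_ennreal).pow_const p
      have hstep : ∫⁻ ω, (‖X ω - f (Y₀ ω, U ω)‖₊ : ENNReal) ^ p ∂μ
          = ∫⁻ zw, ∫⁻ x, (‖x - f zw‖₊ : ENNReal) ^ p ∂ν ∂(γ.prod γ) := by
        simp only [hY₀, hU]
        calc ∫⁻ ω, (‖X ω - f (Z ω, ZΔ ω)‖₊ : ENNReal) ^ p ∂μ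
            = ∫⁻ q, (‖q.1 - f q.2‖₊ : ENNReal) ^ p ∂(ν.prod (γ.prod γ)) := transfer _ hGm
          _ = _ := lintegral_prod_symm _ hGm.aemeasurable
      rw [hstep]
      calc (⨅ g : {g : ℝ → ℝ // Measurable g},
              ∫⁻ ω, (‖X ω - g.1 (Y' ω)‖₊ : ENNReal) ^ p ∂μ)
          = ∫⁻ _ : ℝ × ℝ, (⨅ g : {g : ℝ → ℝ // Measurable g},
              ∫⁻ ω, (‖X ω - g.1 (Y' ω)‖₊ : ENNReal) ^ p ∂μ) ∂(γ.prod γ) := by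
            rw [lintegral_const, measure_univ, mul_one]
        _ ≤ ∫⁻ zw, ∫⁻ x, (‖x - f zw‖₊ : ENNReal) ^ p ∂ν ∂(γ.prod γ) := by
            refine lintegral_mono fun zw => ?_
            have hg : Measurable (fun _ : ℝ => f zw) := measurable_const
            refine (iInf_le _ ⟨fun _ => f zw, hg⟩).trans_eq ?_
            simp only [hY']
            exact (lintegral_map (f := fun x : ℝ => ((‖x - f zw‖₊ : ENNReal)) ^ p)
              ((measurable_id.sub measurable_const).nnnorm.coe_nnreal_ennreal.pow_const p)
              hX).symm
    · -- nondegenerate case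
      set r : ℝ := Real.sqrt (snr₀ + Δ) with hrdef
      have hr : 0 < r := Real.sqrt_pos.mpr hpos
      set a : ℝ := Real.sqrt snr₀ / r with hadef
      set b : ℝ := Real.sqrt Δ / r with hbdef
      have har : a * r = Real.sqrt snr₀ := div_mul_cancel₀ _ hr.ne'
      have hbr : b * r = Real.sqrt Δ := div_mul_cancel₀ _ hr.ne'
      have hab : a ^ 2 + b ^ 2 = 1 := by
        rw [hadef, hbdef, div_pow, div_pow, Real.sq_sqrt hsnr₀, Real.sq_sqrt hΔ,
          hrdef, Real.sq_sqrt hpos.le, ← add_div, div_self hpos.ne']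
      have rotMP := rot_measurePreserving hab
      have fstMP : MeasurePreserving (Prod.fst : ℝ × ℝ → ℝ) (γ.prod γ) γ := by
        refine ⟨measurable_fst, ?_⟩
        rw [Measure.map_fst_prod]; simp
      have WMP : MeasurePreserving (fun zw : ℝ × ℝ => a * zw.1 + b * zw.2) (γ.prod γ) γ := by
        have h : (fun zw : ℝ × ℝ => a * zw.1 + b * zw.2)
            = (Prod.fst : ℝ × ℝ → ℝ) ∘ (fun p : ℝ × ℝ => (a * p.1 + b * p.2, b * p.1 - a * p.2)) :=
          rfl
        rw [h]; exact fstMP.comp rotMP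
      have hptY' : ∀ ω, Y' ω = r * X ω + (a * Z ω + b * ZΔ ω) := by
        intro ω
        rw [hY']
        simp only
        rw [← har, ← hbr]
        field_simp
      have transferY' : ∀ g : ℝ → ℝ, Measurable g →
          ∫⁻ ω, (‖X ω - g (Y' ω)‖₊ : ENNReal) ^ p ∂μ
            = ∫⁻ q : ℝ × ℝ, (‖q.1 - g (r * q.1 + q.2)‖₊ : ENNReal) ^ p ∂(ν.prod γ) := by
        intro g hg
        have hG' : Measurable (fun q : ℝ × ℝ => (‖q.1 - g (r * q.1 + q.2)‖₊ : ENNReal) ^ p) :=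
          ((measurable_fst.sub (hg.comp ((measurable_const.mul measurable_fst).add
            measurable_snd))).nnnorm.coe_nnreal_ennreal).pow_const p
        have ΦMP : MeasurePreserving
            (Prod.map (id : ℝ → ℝ) (fun zw : ℝ × ℝ => a * zw.1 + b * zw.2))
            (ν.prod (γ.prod γ)) (ν.prod γ) := (MeasurePreserving.id ν).prod WMP
        calc ∫⁻ ω, (‖X ω - g (Y' ω)‖₊ : ENNReal) ^ p ∂μ
            = ∫⁻ ω, (fun q : ℝ × (ℝ × ℝ) =>
                (‖q.1 - g (r * q.1 + (a * q.2.1 + b * q.2.2))‖₊ : ENNReal) ^ p)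
                  (X ω, (Z ω, ZΔ ω)) ∂μ := by
              refine lintegral_congr fun ω => ?_
              simp only
              rw [hptY' ω]
          _ = ∫⁻ q, (fun q : ℝ × (ℝ × ℝ) =>
                (‖q.1 - g (r * q.1 + (a * q.2.1 + b * q.2.2))‖₊ : ENNReal) ^ p) q
                  ∂(ν.prod (γ.prod γ)) := by
              exact transfer (fun q : ℝ × (ℝ × ℝ) =>
                (‖q.1 - g (r * q.1 + (a * q.2.1 + b * q.2.2))‖₊ : ENNReal) ^ p)
                (((measurable_fst.sub (hg.comp ((measurable_const.mul measurable_fst).add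
                ((measurable_const.mul (measurable_fst.comp measurable_snd)).add
                  (measurable_const.mul (measurable_snd.comp measurable_snd)))))).nnnorm.coe_nnreal_ennreal).pow_const p)
          _ = ∫⁻ q : ℝ × ℝ, (‖q.1 - g (r * q.1 + q.2)‖₊ : ENNReal) ^ p ∂(ν.prod γ) :=
              ΦMP.lintegral_comp hG'
      intro f hf
      set h : ℝ × ℝ → ℝ := fun q => f (a * q.1 + b * q.2, b * q.1 - a * q.2) with hhdef
      have hh : Measurable h := hf.comp (by fun_prop)
      set G₂ : ℝ × (ℝ × ℝ) → ENNReal :=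
        fun q => (‖q.1 - h (r * q.1 + q.2.1, q.2.2)‖₊ : ENNReal) ^ p with hG₂def
      have hG₂ : Measurable G₂ := by
        refine ((measurable_fst.sub (hh.comp ?_)).nnnorm.coe_nnreal_ennreal).pow_const p
        fun_prop
      have hpt2 : ∀ x z w : ℝ,
          h (r * x + (a * z + b * w), b * z - a * w)
            = f (Real.sqrt snr₀ * x + z, Real.sqrt Δ * x + w) := by
        intro x z w
        rw [hhdef]
        simp only
        congr 1
        refine Prod.ext ?_ ?_
        · simp only
          linear_combination x * har + z * hab
        · simp only
          linear_combination x * hbr + w * hab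
      have step1 : ∫⁻ ω, (‖X ω - f (Y₀ ω, U ω)‖₊ : ENNReal) ^ p ∂μ
          = ∫⁻ q : ℝ × (ℝ × ℝ),
              G₂ (q.1, (a * q.2.1 + b * q.2.2, b * q.2.1 - a * q.2.2)) ∂(ν.prod (γ.prod γ)) := by
        have hGm : Measurable (fun q : ℝ × (ℝ × ℝ) =>
            G₂ (q.1, (a * q.2.1 + b * q.2.2, b * q.2.1 - a * q.2.2))) :=
          hG₂.comp (measurable_fst.prodMk (by fun_prop))
        rw [← transfer _ hGm]
        refine lintegral_congr fun ω => ?_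
        simp only [hY₀, hU, hG₂def]
        rw [hpt2 (X ω) (Z ω) (ZΔ ω)]
      have step2 : ∫⁻ q : ℝ × (ℝ × ℝ),
            G₂ (q.1, (a * q.2.1 + b * q.2.2, b * q.2.1 - a * q.2.2)) ∂(ν.prod (γ.prod γ))
          = ∫⁻ q, G₂ q ∂(ν.prod (γ.prod γ)) := by
        have ΨMP : MeasurePreserving
            (Prod.map (id : ℝ → ℝ)
              (fun p : ℝ × ℝ => (a * p.1 + b * p.2, b * p.1 - a * p.2)))
            (ν.prod (γ.prod γ)) (ν.prod (γ.prod γ)) := (MeasurePreserving.id ν).prod rotMP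
        exact ΨMP.lintegral_comp hG₂
      have step3 : ∫⁻ q, G₂ q ∂(ν.prod (γ.prod γ))
          = ∫⁻ v, ∫⁻ xz : ℝ × ℝ, G₂ (xz.1, (xz.2, v)) ∂(ν.prod γ) ∂γ := by
        have hPA := (measurePreserving_prodAssoc ν γ γ).lintegral_comp hG₂
        have hm : Measurable fun q : (ℝ × ℝ) × ℝ => G₂ (q.1.1, (q.1.2, q.2)) :=
          hG₂.comp (by fun_prop)
        calc ∫⁻ q, G₂ q ∂(ν.prod (γ.prod γ))
            = ∫⁻ q : (ℝ × ℝ) × ℝ, G₂ (MeasurableEquiv.prodAssoc q)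
                ∂((ν.prod γ).prod γ) := hPA.symm
          _ = ∫⁻ xz : ℝ × ℝ, ∫⁻ v, G₂ (xz.1, (xz.2, v)) ∂γ ∂(ν.prod γ) :=
              lintegral_prod _ hm.aemeasurable
          _ = ∫⁻ v, ∫⁻ xz : ℝ × ℝ, G₂ (xz.1, (xz.2, v)) ∂(ν.prod γ) ∂γ :=
              lintegral_lintegral_swap hm.aemeasurable
      rw [step1, step2, step3]
      calc (⨅ g : {g : ℝ → ℝ // Measurable g},
              ∫⁻ ω, (‖X ω - g.1 (Y' ω)‖₊ : ENNReal) ^ p ∂μ)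
          = ∫⁻ _ : ℝ, (⨅ g : {g : ℝ → ℝ // Measurable g},
              ∫⁻ ω, (‖X ω - g.1 (Y' ω)‖₊ : ENNReal) ^ p ∂μ) ∂γ := by
            rw [lintegral_const, measure_univ, mul_one]
        _ ≤ ∫⁻ v, ∫⁻ xz : ℝ × ℝ, G₂ (xz.1, (xz.2, v)) ∂(ν.prod γ) ∂γ := by
            refine lintegral_mono fun v => ?_
            have hgv : Measurable (fun y => h (y, v)) := hh.comp (by fun_prop)
            refine (iInf_le _ ⟨fun y => h (y, v), hgv⟩).trans_eq ?_
            exact transferY' _ hgv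
  -- the easy inequality : (Y₀,U) infimum ≤ Y' infimum
  have easy : (⨅ f : {f : ℝ × ℝ → ℝ // Measurable f},
        ∫⁻ ω, (‖X ω - f.1 (Y₀ ω, U ω)‖₊ : ENNReal) ^ p ∂μ)
      ≤ ⨅ g : {g : ℝ → ℝ // Measurable g},
          ∫⁻ ω, (‖X ω - g.1 (Y' ω)‖₊ : ENNReal) ^ p ∂μ := by
    refine le_iInf fun g => ?_
    rcases eq_or_lt_of_le (show (0:ℝ) ≤ snr₀ + Δ by positivity) with hzero | hpos
    · have h1 : snr₀ = 0 := by linarith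
      have h2 : Δ = 0 := by linarith
      subst h1; subst h2
      simp only [Real.sqrt_zero, zero_mul, zero_add, add_zero, div_zero] at hY₀ hU hY'
      refine (iInf_le _ ⟨fun _ : ℝ × ℝ => g.1 0, measurable_const⟩).trans_eq ?_
      simp [hY']
    · set r : ℝ := Real.sqrt (snr₀ + Δ) with hrdef
      have hr : 0 < r := Real.sqrt_pos.mpr hpos
      set f : ℝ × ℝ → ℝ :=
        fun q => g.1 ((Real.sqrt snr₀ * q.1 + Real.sqrt Δ * q.2) / r) with hfdef
      have hf : Measurable f := g.2.comp (by fun_prop)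
      refine (iInf_le _ ⟨f, hf⟩).trans_eq ?_
      refine lintegral_congr fun ω => ?_
      simp only [hY₀, hU, hY', hfdef]
      have h1 := Real.mul_self_sqrt hsnr₀
      have h2 := Real.mul_self_sqrt hΔ
      have h3 : r * r = snr₀ + Δ := Real.mul_self_sqrt hpos.le
      have e : (Real.sqrt snr₀ * (Real.sqrt snr₀ * X ω + Z ω)
            + Real.sqrt Δ * (Real.sqrt Δ * X ω + ZΔ ω)) / r
          = r * X ω + (Real.sqrt snr₀ * Z ω + Real.sqrt Δ * ZΔ ω) / r := by
        field_simp
        linear_combination (X ω) * h1 + (X ω) * h2 - (X ω) * h3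
      rw [e]
  have heq : (⨅ f : {f : ℝ × ℝ → ℝ // Measurable f},
        ∫⁻ ω, (‖X ω - f.1 (Y₀ ω, U ω)‖₊ : ENNReal) ^ p ∂μ)
      = ⨅ g : {g : ℝ → ℝ // Measurable g},
          ∫⁻ ω, (‖X ω - g.1 (Y' ω)‖₊ : ENNReal) ^ p ∂μ :=
    le_antisymm easy (le_iInf fun f => key f.1 f.2)
  refine ⟨heq, ?_⟩
  rw [← heq]
  refine le_iInf fun g => ?_
  exact iInf_le (fun f : {f : ℝ × ℝ → ℝ // Measurable f} =>
    ∫⁻ ω, (‖X ω - f.1 (Y₀ ω, U ω)‖₊ : ENNReal) ^ p ∂μ) ⟨fun q => g.1 q.1, g.2.comp measurable_fst⟩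
end
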